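/- arXiv:2002.02260 — 6 statements merged into one kernel-verified Lean document; each statement's English description precedes it below -/
import Mathlib

section
/- Let $H_1, H_2$ be complex Hilbert spaces and $T$ a linear, closed, densely defined operator from $H_1$ to $H_2$. Let $F$ be a closed subspace of $H_2$ with $R_T \subset F$, and suppose $\|g\|_{H_2} \le C\|T^*g\|_{H_1}$ for all $g \in D_{T^*}\cap F$ for some $C>0$. Then for every $f \in F$ there exists a unique $u \in D_T \cap N_T^{\perp}$ such that $Tu = f$, and moreover $\|u\|_{H_1} \le C\|f\|_{H_2}$. -/
open scoped InnerProductSpace ComplexConjugate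

local notation "⟪" x ", " y "⟫₁" => @inner ℂ _ _ x y

theorem exists_unique_solution_of_adjoint_estimate
    {H₁ H₂ : Type*} [NormedAddCommGroup H₁] [InnerProductSpace ℂ H₁]
    [NormedAddCommGroup H₂] [InnerProductSpace ℂ H₂]
    [CompleteSpace H₁] [CompleteSpace H₂]
    (T : H₁ →ₗ.[ℂ] H₂)
    (hdense : Dense (T.domain : Set H₁))
    (hclosed : IsClosed (T.graph : Set (H₁ × H₂)))
    (F : Submodule ℂ H₂) (hF : IsClosed (F : Set H₂))
    (hR : Set.range (fun x : T.domain => T x) ⊆ (F : Set H₂))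
    (C : ℝ) (hC : 0 < C)
    (hest : ∀ g : T.adjoint.domain, (g : H₂) ∈ F → ‖(g : H₂)‖ ≤ C * ‖T.adjoint g‖)
    (f : H₂) (hf : f ∈ F) :
    ∃ u : H₁, ∃ hu : u ∈ T.domain,
      u ∈ ((LinearMap.ker T.toFun).map T.domain.subtype)ᗮ ∧
      T ⟨u, hu⟩ = f ∧ ‖u‖ ≤ C * ‖f‖ ∧
      ∀ (u' : H₁) (hu' : u' ∈ T.domain),
        u' ∈ ((LinearMap.ker T.toFun).map T.domain.subtype)ᗮ → T ⟨u', hu'⟩ = f → u' = u := by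
  haveI : CompleteSpace F := hF.completeSpace_coe
  -- range of T lands in F
  have hTF : ∀ x : T.domain, T x ∈ F := fun x => hR ⟨x, rfl⟩
  -- elements of Fᗮ are in the adjoint domain with adjoint value 0
  have hFperp_dom : ∀ b : H₂, b ∈ Fᗮ → b ∈ T.adjoint.domain := by
    intro b hb
    apply LinearPMap.mem_adjoint_domain_of_exists
    refine ⟨0, fun x => ?_⟩
    rw [inner_zero_left]
    exact (Submodule.inner_left_of_mem_orthogonal (hTF x) hb).symm
  have hFperp_zero : ∀ (b : H₂) (hb : b ∈ Fᗮ),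
      T.adjoint ⟨b, hFperp_dom b hb⟩ = 0 := by
    intro b hb
    refine LinearPMap.adjoint_apply_eq hdense _ fun x => ?_
    rw [inner_zero_left]
    exact (Submodule.inner_left_of_mem_orthogonal (hTF x) hb).symm
  -- the key estimate
  have hbound : ∀ g : T.adjoint.domain, ‖(⟪f, (g : H₂)⟫₁ : ℂ)‖ ≤ C * ‖f‖ * ‖T.adjoint g‖ := by
    intro g
    set g₂ : H₂ := (Submodule.orthogonalProjectionOnto Fᗮ (g : H₂) : H₂) with hg₂def
    have hg₂mem : g₂ ∈ Fᗮ := (Submodule.orthogonalProjectionOnto Fᗮ (g : H₂)).2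
    have hg₂dom : g₂ ∈ T.adjoint.domain := hFperp_dom g₂ hg₂mem
    have hg₁F : (g : H₂) - g₂ ∈ F := by
      have := F.starProjection_add_starProjection_orthogonal (g : H₂)
      have h2 : (g : H₂) - g₂ = (Submodule.orthogonalProjectionOnto F (g : H₂) : H₂) := by
        rw [sub_eq_iff_eq_add]; exact this.symm
      rw [h2]; exact (Submodule.orthogonalProjectionOnto F (g : H₂)).2
    set g₁ : T.adjoint.domain := ⟨(g : H₂) - g₂, sub_mem g.2 hg₂dom⟩ with hg₁def
    have hsplit : g₁ = g - ⟨g₂, hg₂dom⟩ := by ext; simp [hg₁def]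
    have hTg₁ : T.adjoint g₁ = T.adjoint g := by
      rw [hsplit, T.adjoint.map_sub, hFperp_zero g₂ hg₂mem, sub_zero]
    have hval : (⟪f, (g : H₂)⟫₁ : ℂ) = ⟪f, ((g : H₂) - g₂ : H₂)⟫₁ := by
      rw [inner_sub_right, Submodule.inner_right_of_mem_orthogonal hf hg₂mem, sub_zero]
    rw [hval]
    calc ‖(⟪f, ((g : H₂) - g₂ : H₂)⟫₁ : ℂ)‖ ≤ ‖f‖ * ‖(g : H₂) - g₂‖ := norm_inner_le_norm _ _
      _ ≤ ‖f‖ * (C * ‖T.adjoint g₁‖) := by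
          apply mul_le_mul_of_nonneg_left _ (norm_nonneg f)
          exact hest g₁ hg₁F
      _ = C * ‖f‖ * ‖T.adjoint g‖ := by rw [hTg₁]; ring
  -- construct the functional on the range of the adjoint
  have hCf : (0 : ℝ) ≤ C * ‖f‖ := mul_nonneg hC.le (norm_nonneg f)
  obtain ⟨u', hu'norm, hu'inner⟩ :
      ∃ u' : H₁, ‖u'‖ ≤ C * ‖f‖ ∧
        ∀ g : T.adjoint.domain, ⟪u', T.adjoint g⟫₁ = ⟪f, (g : H₂)⟫₁ := by
    set ψ : T.adjoint.domain →ₗ[ℂ] ℂ :=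
      ((innerSL ℂ f).toLinearMap).comp T.adjoint.domain.subtype with hψdef
    have hψapp : ∀ g : T.adjoint.domain, ψ g = ⟪f, (g : H₂)⟫₁ := fun g => rfl
    have hker : LinearMap.ker T.adjoint.toFun ≤ LinearMap.ker ψ := by
      intro g hg
      rw [LinearMap.mem_ker] at hg ⊢
      have h0 : T.adjoint g = 0 := hg
      have := hbound g
      rw [h0, norm_zero, mul_zero] at this
      rw [hψapp]
      exact norm_le_zero_iff.mp this
    set Φ : ↥(LinearMap.range T.adjoint.toFun) →ₗ[ℂ] ℂ :=
      ((LinearMap.ker T.adjoint.toFun).liftQ ψ hker).comp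
        (T.adjoint.toFun.quotKerEquivRange.symm : _ →ₗ[ℂ] _) with hΦdef
    have hΦapp : ∀ g : T.adjoint.domain,
        Φ ⟨T.adjoint g, LinearMap.mem_range_self _ g⟩ = ⟪f, (g : H₂)⟫₁ := by
      intro g
      rw [hΦdef]
      simp only [LinearMap.coe_comp, Function.comp_apply, LinearEquiv.coe_coe]
      rw [show (⟨T.adjoint g, LinearMap.mem_range_self _ g⟩ :
            ↥(LinearMap.range T.adjoint.toFun)) =
          ⟨T.adjoint.toFun g, LinearMap.mem_range_self _ g⟩ from rfl]
      rw [LinearMap.quotKerEquivRange_symm_apply_image]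
      rw [Submodule.mkQ_apply, Submodule.liftQ_apply]
      exact hψapp g
    have hΦbound : ∀ v : ↥(LinearMap.range T.adjoint.toFun), ‖Φ v‖ ≤ (C * ‖f‖) * ‖v‖ := by
      rintro ⟨v, hv⟩
      obtain ⟨g, hg⟩ := hv
      have hveq : (⟨v, ⟨g, hg⟩⟩ : ↥(LinearMap.range T.adjoint.toFun)) =
          ⟨T.adjoint g, LinearMap.mem_range_self _ g⟩ := Subtype.ext hg.symm
      rw [hveq, hΦapp g]
      have hnv : ‖(⟨T.adjoint g, LinearMap.mem_range_self _ g⟩ :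
          ↥(LinearMap.range T.adjoint.toFun))‖ = ‖T.adjoint g‖ := rfl
      rw [hnv]
      exact hbound g
    set Φc : ↥(LinearMap.range T.adjoint.toFun) →L[ℂ] ℂ :=
      Φ.mkContinuous (C * ‖f‖) hΦbound with hΦcdef
    obtain ⟨G, hGext, hGnorm⟩ := exists_extension_norm_eq (LinearMap.range T.adjoint.toFun) Φc
    refine ⟨(InnerProductSpace.toDual ℂ H₁).symm G, ?_, ?_⟩
    · rw [LinearIsometryEquiv.norm_map, hGnorm]
      exact Φ.mkContinuous_norm_le hCf hΦbound
    · intro g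
      rw [InnerProductSpace.toDual_symm_apply]
      have := hGext ⟨T.adjoint g, LinearMap.mem_range_self _ g⟩
      rw [this]
      exact hΦapp g
  -- u' is in the domain of T and T u' = f
  have hgraph : (u', f) ∈ T.graph := by
    set e : WithLp 2 (H₁ × H₂) ≃L[ℂ] H₁ × H₂ :=
      WithLp.prodContinuousLinearEquiv 2 ℂ H₁ H₂ with hedef
    set G₂ : Submodule ℂ (WithLp 2 (H₁ × H₂)) :=
      T.graph.comap (e.toLinearEquiv : WithLp 2 (H₁ × H₂) →ₗ[ℂ] H₁ × H₂) with hG₂def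
    have hG₂closed : IsClosed (G₂ : Set (WithLp 2 (H₁ × H₂))) := by
      have : (G₂ : Set (WithLp 2 (H₁ × H₂))) = ⇑e ⁻¹' (T.graph : Set (H₁ × H₂)) := rfl
      rw [this]
      exact hclosed.preimage e.continuous
    haveI : CompleteSpace G₂ := hG₂closed.completeSpace_coe
    have horth : G₂ᗮᗮ = G₂ := Submodule.orthogonal_orthogonal G₂
    have hmemG : ∀ x : T.domain,
        ((WithLp.equiv 2 (H₁ × H₂)).symm ((x : H₁), T x)) ∈ G₂ := by
      intro x
      show e ((WithLp.equiv 2 (H₁ × H₂)).symm ((x : H₁), T x)) ∈ T.graph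
      exact T.mem_graph x
    have hmem : ((WithLp.equiv 2 (H₁ × H₂)).symm (u', f)) ∈ G₂ᗮᗮ := by
      rw [Submodule.mem_orthogonal]
      intro p hp
      have hb : ∀ x : T.domain, ⟪(-(p.fst) : H₁), (x : H₁)⟫₁ = ⟪p.snd, T x⟫₁ := by
        intro x
        have h0 := (Submodule.mem_orthogonal G₂ p).mp hp _ (hmemG x)
        rw [WithLp.prod_inner_apply] at h0
        have h1 := congrArg (starRingEnd ℂ) h0
        simp only [map_add, inner_conj_symm, map_zero] at h1
        have : ⟪p.fst, (x : H₁)⟫₁ + ⟪p.snd, T x⟫₁ = 0 := by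
          convert h1 using 2
          all_goals rfl
        rw [inner_neg_left]
        linear_combination -this
      have hbdom : p.snd ∈ T.adjoint.domain :=
        LinearPMap.mem_adjoint_domain_of_exists p.snd ⟨-(p.fst), hb⟩
      have hTb : T.adjoint ⟨p.snd, hbdom⟩ = -(p.fst) :=
        LinearPMap.adjoint_apply_eq hdense _ hb
      rw [WithLp.prod_inner_apply]
      have h2 := hu'inner ⟨p.snd, hbdom⟩
      rw [hTb] at h2
      have h3 := congrArg (starRingEnd ℂ) h2
      simp only [inner_conj_symm] at h3
      rw [inner_neg_left] at h3
      change ⟪p.fst, u'⟫₁ + ⟪p.snd, f⟫₁ = 0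
      linear_combination -h3
    rw [horth] at hmem
    exact hmem
  rw [LinearPMap.mem_graph_iff] at hgraph
  obtain ⟨y, hy1, hy2⟩ := hgraph
  simp only at hy1 hy2
  -- kernel submodule
  set N : Submodule ℂ H₁ := (LinearMap.ker T.toFun).map T.domain.subtype with hNdef
  have hNclosed : IsClosed (N : Set H₁) := by
    have : (N : Set H₁) = (fun x : H₁ => (x, (0 : H₂))) ⁻¹' (T.graph : Set (H₁ × H₂)) := by
      ext x
      simp only [Set.mem_preimage, SetLike.mem_coe, LinearPMap.mem_graph_iff, hNdef,
        Submodule.mem_map, LinearMap.mem_ker]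
      constructor
      · rintro ⟨z, hz, rfl⟩; exact ⟨z, rfl, hz⟩
      · rintro ⟨z, rfl, hz⟩; exact ⟨z, hz, rfl⟩
    rw [this]
    exact hclosed.preimage (continuous_id.prodMk continuous_const)
  haveI : CompleteSpace N := hNclosed.completeSpace_coe
  have hNsub : N ≤ T.domain := by
    rintro x ⟨z, hz, rfl⟩; exact z.2
  -- project away the kernel component
  set w : H₁ := (Submodule.orthogonalProjectionOnto N u' : H₁) with hwdef
  have hwN : w ∈ N := (Submodule.orthogonalProjectionOnto N u').2
  set u : H₁ := u' - w with hudef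
  have huperp : u ∈ Nᗮ := Submodule.sub_starProjection_mem_orthogonal (K := N) u'
  have hu : u ∈ T.domain := by
    rw [hudef, ← hy1]
    exact sub_mem y.2 (hNsub hwN)
  have hTw : ∀ hw' : w ∈ T.domain, T ⟨w, hw'⟩ = 0 := by
    intro hw'
    obtain ⟨z, hz, hzw⟩ := hwN
    have : (⟨w, hw'⟩ : T.domain) = z := by ext; exact hzw.symm
    rw [this]
    exact hz
  have hTu : T ⟨u, hu⟩ = f := by
    have hsub : (⟨u, hu⟩ : T.domain) = y - ⟨w, hNsub hwN⟩ := by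
      ext; simp [hudef, hy1]
    rw [hsub, T.map_sub, hy2, hTw (hNsub hwN), sub_zero]
  have hunorm : ‖u‖ ≤ C * ‖f‖ := by
    refine le_trans ?_ hu'norm
    have : ⟪w, u⟫₁ = 0 :=
      Submodule.inner_right_of_mem_orthogonal hwN huperp
    have hwu : (⟪w, u⟫₁ : ℂ) = 0 :=
      Submodule.inner_right_of_mem_orthogonal hwN huperp
    have hpyth : ‖u'‖ ^ 2 = ‖w‖ ^ 2 + ‖u‖ ^ 2 := by
      have heq : u' = w + u := by rw [hudef]; abel
      rw [heq]
      simpa [pow_two] using norm_add_sq_eq_norm_sq_add_norm_sq_of_inner_eq_zero w u hwu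
    nlinarith [norm_nonneg w, norm_nonneg u, norm_nonneg u', sq_nonneg ‖w‖]
  refine ⟨u, hu, huperp, hTu, hunorm, ?_⟩
  -- uniqueness
  intro v hv hvperp hTv
  have hdiff : v - u ∈ N := by
    refine ⟨⟨v, hv⟩ - ⟨u, hu⟩, ?_, rfl⟩
    simp only [SetLike.mem_coe, LinearMap.mem_ker, map_sub]
    show T ⟨v, hv⟩ - T ⟨u, hu⟩ = 0
    rw [hTv, hTu, sub_self]
  have hdiffperp : v - u ∈ Nᗮ := sub_mem hvperp huperp
  have hvu : v - u = 0 := by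
    have := (Submodule.orthogonal_disjoint N).le_bot ⟨hdiff, hdiffperp⟩
    simpa using this
  exact sub_eq_zero.mp hvu
end

section
/- Let $H_1, H_2, H_3$ be complex Hilbert spaces, $T: H_1 \to H_2$ and $S: H_2 \to H_3$ linear, closed, densely defined operators with $R_T \subset N_S$. If there exists a constant $C > 0$ such that $\|g\|_{H_2}^2 \le C^2(\|T^*g\|_{H_1}^2 + \|Sg\|_{H_3}^2)$ for all $g \in D_{T^*} \cap D_S$, then $R_T = N_S$. -/
local notation "⟪" x ", " y "⟫" => @inner ℂ _ _ x y

theorem graph_mem_of_forall_adjoint'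
    {H₁ H₂ : Type*} [NormedAddCommGroup H₁] [InnerProductSpace ℂ H₁]
    [NormedAddCommGroup H₂] [InnerProductSpace ℂ H₂]
    [CompleteSpace H₁] [CompleteSpace H₂]
    (T : H₁ →ₗ.[ℂ] H₂) (hTdense : Dense (T.domain : Set H₁))
    (hTclosed : IsClosed (T.graph : Set (H₁ × H₂)))
    (u : H₁) (f : H₂)
    (h : ∀ g : T.adjoint.domain, ⟪(T.adjoint g : H₁), u⟫ = ⟪(g : H₂), f⟫) :
    (u, f) ∈ T.graph := by
  set G : Submodule ℂ (WithLp 2 (H₁ × H₂)) :=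
    T.graph.comap (WithLp.linearEquiv 2 ℂ (H₁ × H₂)).toLinearMap with hG
  have hGset : (G : Set (WithLp 2 (H₁ × H₂))) =
      (WithLp.prodContinuousLinearEquiv 2 ℂ H₁ H₂) ⁻¹' (T.graph : Set (H₁ × H₂)) := rfl
  have hGclosed : IsClosed (G : Set (WithLp 2 (H₁ × H₂))) := by
    rw [hGset]
    exact hTclosed.preimage (WithLp.prodContinuousLinearEquiv 2 ℂ H₁ H₂).continuous
  haveI : CompleteSpace G := hGclosed.completeSpace_coe
  have key : ((WithLp.equiv 2 (H₁ × H₂)).symm (u, f)) ∈ Gᗮᗮ := by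
    rw [Submodule.mem_orthogonal]
    intro v hv
    have horth : ∀ x : T.domain, ⟪(x : H₁), v.fst⟫ + ⟪T x, v.snd⟫ = 0 := by
      intro x
      have hw : ((WithLp.equiv 2 (H₁ × H₂)).symm ((x : H₁), T x)) ∈ G := by
        simp only [hG, Submodule.mem_comap, WithLp.linearEquiv_apply, Equiv.apply_symm_apply]
        exact T.mem_graph x
      have := hv _ hw
      rw [WithLp.prod_inner_apply] at this
      simpa using this
    have hconj : ∀ x : T.domain, ⟪-v.fst, (x : H₁)⟫ = ⟪v.snd, T x⟫ := by
      intro x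
      have := congrArg (starRingEnd ℂ) (horth x)
      simp only [map_add, inner_conj_symm, map_zero] at this
      rw [inner_neg_left]
      linear_combination -this
    have hb : v.snd ∈ T.adjoint.domain :=
      LinearPMap.mem_adjoint_domain_of_exists _ ⟨-v.fst, hconj⟩
    have hTb : T.adjoint ⟨v.snd, hb⟩ = -v.fst :=
      LinearPMap.adjoint_apply_eq hTdense _ hconj
    rw [WithLp.prod_inner_apply]
    have h2 := h ⟨v.snd, hb⟩
    rw [hTb] at h2
    simp only [WithLp.equiv_symm_apply, WithLp.toLp_fst, WithLp.toLp_snd]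
    rw [show ⟪v.ofLp.2, f⟫ = ⟪-v.ofLp.1, u⟫ from h2.symm, inner_neg_left]
    ring
  rw [Submodule.orthogonal_orthogonal] at key
  simpa only [hG, Submodule.mem_comap, LinearEquiv.coe_coe, WithLp.coe_linearEquiv, WithLp.equiv_symm_apply, WithLp.ofLp_toLp] using key

theorem range_eq_ker_of_joint_estimate
    {H₁ H₂ H₃ : Type*} [NormedAddCommGroup H₁] [InnerProductSpace ℂ H₁]
    [NormedAddCommGroup H₂] [InnerProductSpace ℂ H₂]
    [NormedAddCommGroup H₃] [InnerProductSpace ℂ H₃]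
    [CompleteSpace H₁] [CompleteSpace H₂] [CompleteSpace H₃]
    (T : H₁ →ₗ.[ℂ] H₂) (S : H₂ →ₗ.[ℂ] H₃)
    (hTdense : Dense (T.domain : Set H₁)) (hSdense : Dense (S.domain : Set H₂))
    (hTclosed : IsClosed (T.graph : Set (H₁ × H₂)))
    (hSclosed : IsClosed (S.graph : Set (H₂ × H₃)))
    (hRN : Set.range (fun x : T.domain => T x) ⊆ {y : H₂ | ∃ hy : y ∈ S.domain, S ⟨y, hy⟩ = 0})
    (C : ℝ) (hC : 0 < C)
    (hest : ∀ (g : H₂) (hg₁ : g ∈ T.adjoint.domain) (hg₂ : g ∈ S.domain),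
      ‖g‖ ^ 2 ≤ C ^ 2 * (‖T.adjoint ⟨g, hg₁⟩‖ ^ 2 + ‖S ⟨g, hg₂⟩‖ ^ 2)) :
    Set.range (fun x : T.domain => T x) = {y : H₂ | ∃ hy : y ∈ S.domain, S ⟨y, hy⟩ = 0} := by
  -- the kernel of S as a closed submodule
  set N : Submodule ℂ H₂ :=
    S.graph.comap ((LinearMap.id : H₂ →ₗ[ℂ] H₂).prod (0 : H₂ →ₗ[ℂ] H₃)) with hN
  have hNmem : ∀ y : H₂, y ∈ N ↔ ∃ hy : y ∈ S.domain, S ⟨y, hy⟩ = 0 := by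
    intro y
    simp only [hN, Submodule.mem_comap, LinearMap.prod_apply, LinearMap.id_coe, id_eq,
      LinearMap.zero_apply, Pi.prod, Function.prod_apply, S.mem_graph_iff]
    constructor
    · rintro ⟨z, hz1, hz2⟩
      exact ⟨hz1 ▸ z.2, by rwa [show (⟨y, hz1 ▸ z.2⟩ : S.domain) = z from Subtype.ext hz1.symm]⟩
    · rintro ⟨hy, hy0⟩
      exact ⟨⟨y, hy⟩, rfl, hy0⟩
  have hNclosed : IsClosed (N : Set H₂) := by
    have : (N : Set H₂) = (fun y : H₂ => (y, (0 : H₃))) ⁻¹' (S.graph : Set (H₂ × H₃)) := rfl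
    rw [this]
    exact hSclosed.preimage (by fun_prop)
  haveI : CompleteSpace N := hNclosed.completeSpace_coe
  -- orthogonal complement of N is in the kernel of T†
  have hperp : ∀ h : H₂, h ∈ Nᗮ → ∃ hd : h ∈ T.adjoint.domain, T.adjoint ⟨h, hd⟩ = 0 := by
    intro h hh
    have hc : ∀ x : T.domain, ⟪(0 : H₁), (x : H₁)⟫ = ⟪h, T x⟫ := by
      intro x
      have hTx : T x ∈ N := (hNmem _).2 (hRN ⟨x, rfl⟩)
      rw [inner_zero_left, (Submodule.mem_orthogonal' N h).1 hh _ hTx]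
    exact ⟨LinearPMap.mem_adjoint_domain_of_exists _ ⟨0, hc⟩,
      LinearPMap.adjoint_apply_eq hTdense _ hc⟩
  -- the projection estimate
  have hproj : ∀ (g : H₂) (hg : g ∈ T.adjoint.domain),
      ∃ hg' : ((N.orthogonalProjectionOnto g : H₂)) ∈ T.adjoint.domain,
        T.adjoint ⟨(N.orthogonalProjectionOnto g : H₂), hg'⟩ = T.adjoint ⟨g, hg⟩ ∧
        ‖(N.orthogonalProjectionOnto g : H₂)‖ ≤ C * ‖T.adjoint ⟨g, hg⟩‖ := by
    intro g hg
    obtain ⟨hd, hT0⟩ := hperp _ (show g - (N.orthogonalProjectionOnto g : H₂) ∈ Nᗮ from N.sub_starProjection_mem_orthogonal g)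
    have hg' : ((N.orthogonalProjectionOnto g : H₂)) ∈ T.adjoint.domain := by
      rw [← sub_sub_cancel g ((N.orthogonalProjectionOnto g : H₂))]
      exact Submodule.sub_mem _ hg hd
    have hval : T.adjoint ⟨(N.orthogonalProjectionOnto g : H₂), hg'⟩ = T.adjoint ⟨g, hg⟩ := by
      have heq : (⟨(N.orthogonalProjectionOnto g : H₂), hg'⟩ : T.adjoint.domain)
          = ⟨g, hg⟩ - ⟨g - N.orthogonalProjectionOnto g, hd⟩ := by
        apply Subtype.ext; simp
      rw [heq, T.adjoint.map_sub, hT0, sub_zero]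
    refine ⟨hg', hval, ?_⟩
    obtain ⟨hyd, hy0⟩ := (hNmem _).1 (N.orthogonalProjectionOnto g).2
    have h1 := hest _ hg' hyd
    rw [hy0, norm_zero, hval] at h1
    have h2 : ‖(N.orthogonalProjectionOnto g : H₂)‖ ^ 2 ≤ (C * ‖T.adjoint ⟨g, hg⟩‖) ^ 2 := by
      calc ‖(N.orthogonalProjectionOnto g : H₂)‖ ^ 2
          ≤ C ^ 2 * (‖T.adjoint ⟨g, hg⟩‖ ^ 2 + 0 ^ 2) := h1
        _ = (C * ‖T.adjoint ⟨g, hg⟩‖) ^ 2 := by ring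
    exact (pow_le_pow_iff_left₀ (norm_nonneg _) (by positivity) two_ne_zero).1 h2
  -- now the main argument
  refine Set.Subset.antisymm hRN ?_
  rintro f ⟨hfd, hSf⟩
  have hfN : f ∈ N := (hNmem f).2 ⟨hfd, hSf⟩
  have hinner : ∀ g : H₂, ⟪f, g⟫ = ⟪f, (N.orthogonalProjectionOnto g : H₂)⟫ := by
    intro g
    have h0 : ⟪f, g - (N.orthogonalProjectionOnto g : H₂)⟫ = 0 :=
      Submodule.inner_right_of_mem_orthogonal hfN
        (N.sub_starProjection_mem_orthogonal g)
    rw [inner_sub_right, sub_eq_zero] at h0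
    exact h0
  set A : T.adjoint.domain →ₗ[ℂ] H₁ := T.adjoint.toFun with hA
  set B : T.adjoint.domain →ₗ[ℂ] ℂ :=
    ((innerSL ℂ f).toLinearMap).comp T.adjoint.domain.subtype with hB
  have hBapp : ∀ g : T.adjoint.domain, B g = ⟪f, (g : H₂)⟫ := fun g => rfl
  have hAapp : ∀ g : T.adjoint.domain, A g = T.adjoint ⟨(g : H₂), g.2⟩ := fun g => rfl
  have hker : LinearMap.ker A ≤ LinearMap.ker B := by
    intro g hg
    rw [LinearMap.mem_ker] at hg ⊢
    obtain ⟨hg', hval, hnorm⟩ := hproj (g : H₂) g.2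
    rw [← hAapp g, hg, norm_zero, mul_zero] at hnorm
    have hP0 : (N.orthogonalProjectionOnto (g : H₂) : H₂) = 0 :=
      norm_eq_zero.1 (le_antisymm hnorm (norm_nonneg _))
    rw [hBapp, hinner, hP0, inner_zero_right]
  set ψ : LinearMap.range A →ₗ[ℂ] ℂ :=
    (Submodule.liftQ (LinearMap.ker A) B hker).comp (A.quotKerEquivRange.symm.toLinearMap)
    with hψdef
  have hψ : ∀ (g : T.adjoint.domain) (hm : A g ∈ LinearMap.range A), ψ ⟨A g, hm⟩ = B g := by
    intro g hm
    have h1 : A.quotKerEquivRange.symm ⟨A g, hm⟩ = Submodule.Quotient.mk g := by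
      rw [LinearEquiv.symm_apply_eq]
      exact Subtype.ext (A.quotKerEquivRange_apply_mk g)
    simp only [hψdef, LinearMap.coe_comp, LinearEquiv.coe_coe, Function.comp_apply, h1,
      Submodule.liftQ_apply]
  have hbound : ∀ v : LinearMap.range A, ‖ψ v‖ ≤ (C * ‖f‖) * ‖v‖ := by
    rintro ⟨v, hv⟩
    obtain ⟨g, rfl⟩ := hv
    obtain ⟨hg', hval, hnorm⟩ := hproj (g : H₂) g.2
    rw [← hAapp g] at hnorm
    have hvnorm : ‖(⟨A g, LinearMap.mem_range_self A g⟩ : LinearMap.range A)‖ = ‖A g‖ := rfl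
    change ‖ψ ⟨A g, LinearMap.mem_range_self A g⟩‖ ≤ C * ‖f‖ * ‖(⟨A g, LinearMap.mem_range_self A g⟩ : LinearMap.range A)‖
    rw [hψ g _, hvnorm, hBapp, hinner]
    calc ‖⟪f, (N.orthogonalProjectionOnto (g : H₂) : H₂)⟫‖
        ≤ ‖f‖ * ‖(N.orthogonalProjectionOnto (g : H₂) : H₂)‖ := norm_inner_le_norm _ _
      _ ≤ ‖f‖ * (C * ‖A g‖) := by
          exact mul_le_mul_of_nonneg_left hnorm (norm_nonneg f)
      _ = (C * ‖f‖) * ‖A g‖ := by ring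
  set ψc : LinearMap.range A →L[ℂ] ℂ := LinearMap.mkContinuous ψ (C * ‖f‖) hbound with hψc
  obtain ⟨Φ, hΦ, -⟩ := exists_extension_norm_eq (LinearMap.range A) ψc
  set u : H₁ := (InnerProductSpace.toDual ℂ H₁).symm Φ with hu
  have hmain : ∀ g : T.adjoint.domain, ⟪(T.adjoint g : H₁), u⟫ = ⟪(g : H₂), f⟫ := by
    intro g
    rw [← inner_conj_symm]
    have h1 : ⟪u, (T.adjoint g : H₁)⟫ = Φ (T.adjoint g) :=
      InnerProductSpace.toDual_symm_apply
    have h2 : Φ (A g) = ψc ⟨A g, LinearMap.mem_range_self A g⟩ :=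
      hΦ ⟨A g, LinearMap.mem_range_self A g⟩
    have h3 : ψc ⟨A g, LinearMap.mem_range_self A g⟩ = B g := hψ g _
    have h4 : ⟪u, (T.adjoint g : H₁)⟫ = ⟪f, (g : H₂)⟫ := by
      rw [h1]
      exact (h2.trans h3).trans (hBapp g)
    rw [h4, inner_conj_symm]
  have hgraph := graph_mem_of_forall_adjoint' T hTdense hTclosed u f hmain
  rw [T.mem_graph_iff] at hgraph
  obtain ⟨x, hx1, hx2⟩ := hgraph
  exact ⟨x, hx2⟩
end

section
/- If a densely defined closed linear operator $T$ between Hilbert spaces $H_1, H_2$ satisfies $\|g\|_{H_2} \le C\|T^*g\|_{H_1}$ for all $g \in D_{T^*} \cap F$ for a closed subspace $F \supset R_T$, then the set of all solutions $x \in D_T$ of $Tx = f$ (for $f \in F$) equals $\{u + v : v \in N_T\}$, where $u$ is the unique solution lying in $D_T \cap N_T^{\perp}$. -/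
open LinearPMap
local notation "⟪" x ", " y "⟫" => @inner ℂ _ _ x y

section Aux
variable {H₁ H₂ : Type*} [NormedAddCommGroup H₁] [InnerProductSpace ℂ H₁]
  [NormedAddCommGroup H₂] [InnerProductSpace ℂ H₂]
  [CompleteSpace H₁] [CompleteSpace H₂]

lemma mem_graph_of_orth (T : H₁ →ₗ.[ℂ] H₂) (hdense : Dense (T.domain : Set H₁))
    (hclosed : IsClosed (T.graph : Set (H₁ × H₂))) (u : H₁) (f : H₂)
    (h : ∀ g : T.adjoint.domain, ⟪u, T.adjoint g⟫ = ⟪f, (g : H₂)⟫) :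
    (u, f) ∈ T.graph := by
  set e := WithLp.prodContinuousLinearEquiv 2 ℂ H₁ H₂ with he
  set G : Submodule ℂ (WithLp 2 (H₁ × H₂)) :=
    T.graph.comap (e.toLinearEquiv.toLinearMap : WithLp 2 (H₁ × H₂) →ₗ[ℂ] H₁ × H₂) with hG
  have hGc : IsClosed (G : Set (WithLp 2 (H₁ × H₂))) :=
    hclosed.preimage e.continuous
  haveI : CompleteSpace G := hGc.completeSpace_coe
  have key : e.symm (u, f) ∈ G := by
    rw [← Submodule.orthogonal_orthogonal G, Submodule.mem_orthogonal]
    intro w hw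
    have horth : ∀ x : T.domain, ⟪(x : H₁), w.fst⟫ + ⟪T x, w.snd⟫ = 0 := by
      intro x
      have h0 : ⟪(e.symm ((x : H₁), T x) : WithLp 2 (H₁ × H₂)), w⟫ = 0 :=
        (Submodule.mem_orthogonal G w).mp hw _ (by simp [hG, T.mem_graph x])
      rwa [WithLp.prod_inner_apply] at h0
    have hb : w.snd ∈ T.adjoint.domain := by
      apply mem_adjoint_domain_of_exists
      refine ⟨-w.fst, fun x => ?_⟩
      have := congrArg (starRingEnd ℂ) (horth x)
      simp only [_root_.map_add, inner_conj_symm, _root_.map_zero] at this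
      rw [inner_neg_left]
      linear_combination -this
    have hTb : T.adjoint ⟨w.snd, hb⟩ = -w.fst := by
      apply adjoint_apply_eq hdense
      intro x
      have := congrArg (starRingEnd ℂ) (horth x)
      simp only [_root_.map_add, inner_conj_symm, _root_.map_zero] at this
      rw [inner_neg_left]
      linear_combination -this
    rw [WithLp.prod_inner_apply]
    simp only [WithLp.ofLp_fst, WithLp.ofLp_snd]
    have h1 : ⟪w.fst, u⟫ = -⟪w.snd, f⟫ := by
      have h2 := h ⟨w.snd, hb⟩
      rw [hTb, inner_neg_right] at h2
      have := congrArg (starRingEnd ℂ) h2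
      simp only [_root_.map_neg, inner_conj_symm] at this
      linear_combination -this
    have hfst : (e.symm (u, f) : WithLp 2 (H₁ × H₂)).fst = u := rfl
    have hsnd : (e.symm (u, f) : WithLp 2 (H₁ × H₂)).snd = f := rfl
    rw [hfst, hsnd, h1]
    ring
  have := key
  rw [hG, Submodule.mem_comap] at this
  simpa using this

lemma ker_map_closed (T : H₁ →ₗ.[ℂ] H₂) (hclosed : IsClosed (T.graph : Set (H₁ × H₂))) :
    IsClosed (((LinearMap.ker T.toFun).map T.domain.subtype : Submodule ℂ H₁) : Set H₁) := by
  have h : (((LinearMap.ker T.toFun).map T.domain.subtype : Submodule ℂ H₁) : Set H₁)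
      = (fun x : H₁ => (x, (0:H₂))) ⁻¹' (T.graph : Set (H₁ × H₂)) := by
    ext x
    simp only [Set.mem_preimage, SetLike.mem_coe, Submodule.mem_map, LinearMap.mem_ker,
      T.mem_graph_iff]
    constructor
    · rintro ⟨y, hy, rfl⟩
      exact ⟨y, rfl, hy⟩
    · rintro ⟨y, rfl, hy⟩
      exact ⟨y, hy, rfl⟩
  rw [h]
  exact hclosed.preimage (continuous_id.prodMk continuous_const)
end Aux

theorem solution_set_eq_of_adjoint_estimate
    {H₁ H₂ : Type*} [NormedAddCommGroup H₁] [InnerProductSpace ℂ H₁]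
    [NormedAddCommGroup H₂] [InnerProductSpace ℂ H₂]
    [CompleteSpace H₁] [CompleteSpace H₂]
    (T : H₁ →ₗ.[ℂ] H₂)
    (hdense : Dense (T.domain : Set H₁))
    (hclosed : IsClosed (T.graph : Set (H₁ × H₂)))
    (F : Submodule ℂ H₂) (hF : IsClosed (F : Set H₂))
    (hR : Set.range (fun x : T.domain => T x) ⊆ (F : Set H₂))
    (C : ℝ) (hC : 0 < C)
    (hest : ∀ g : T.adjoint.domain, (g : H₂) ∈ F → ‖(g : H₂)‖ ≤ C * ‖T.adjoint g‖)
    (f : H₂) (hf : f ∈ F) :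
    ∃ u : H₁, ∃ hu : u ∈ T.domain,
      u ∈ ((LinearMap.ker T.toFun).map T.domain.subtype)ᗮ ∧
      T ⟨u, hu⟩ = f ∧
      (∀ (u' : H₁) (hu' : u' ∈ T.domain),
        u' ∈ ((LinearMap.ker T.toFun).map T.domain.subtype)ᗮ → T ⟨u', hu'⟩ = f → u' = u) ∧
      {x : H₁ | ∃ hx : x ∈ T.domain, T ⟨x, hx⟩ = f} =
        {w : H₁ | ∃ v ∈ (LinearMap.ker T.toFun).map T.domain.subtype, w = u + v} := by
  haveI : CompleteSpace F := hF.completeSpace_coe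
  -- key estimate
  have hkey : ∀ g : T.adjoint.domain, ‖(⟪f, (g:H₂)⟫ : ℂ)‖ ≤ C * ‖f‖ * ‖T.adjoint g‖ := by
    intro g
    set p : H₂ := (Submodule.orthogonalProjection F (g:H₂) : H₂) with hp
    have hpF : p ∈ F := (Submodule.orthogonalProjection F (g:H₂)).2
    have hqorth : (g:H₂) - p ∈ Fᗮ := Submodule.sub_starProjection_mem_orthogonal _
    have hqTx : ∀ x : T.domain, ⟪(g:H₂) - p, T x⟫ = 0 := fun x =>
      (Submodule.mem_orthogonal' F _).mp hqorth _ (hR ⟨x, rfl⟩)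
    have hqdom : (g:H₂) - p ∈ T.adjoint.domain :=
      mem_adjoint_domain_of_exists _ ⟨0, fun x => by
        rw [inner_zero_left]; exact (hqTx x).symm⟩
    have hqzero : T.adjoint ⟨(g:H₂) - p, hqdom⟩ = 0 :=
      adjoint_apply_eq hdense _ (fun x => by rw [inner_zero_left]; exact (hqTx x).symm)
    have hpdom : p ∈ T.adjoint.domain := by
      have := T.adjoint.domain.sub_mem g.2 hqdom
      simpa using this
    have hTp : T.adjoint ⟨p, hpdom⟩ = T.adjoint g := by
      have h2 : (⟨p, hpdom⟩ : T.adjoint.domain) = g - ⟨(g:H₂) - p, hqdom⟩ := by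
        apply Subtype.ext; simp
      rw [h2, T.adjoint.map_sub, hqzero, sub_zero]
    have hfq : ⟪f, (g:H₂) - p⟫ = 0 := (Submodule.mem_orthogonal F _).mp hqorth f hf
    have hfg : ⟪f, (g:H₂)⟫ = ⟪f, p⟫ := by
      rw [← sub_eq_zero, ← inner_sub_right]; exact hfq
    calc ‖(⟪f,(g:H₂)⟫ : ℂ)‖ = ‖(⟪f, p⟫ : ℂ)‖ := by rw [hfg]
      _ ≤ ‖f‖ * ‖p‖ := norm_inner_le_norm _ _
      _ ≤ ‖f‖ * (C * ‖T.adjoint ⟨p, hpdom⟩‖) :=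
          mul_le_mul_of_nonneg_left (hest ⟨p, hpdom⟩ hpF) (norm_nonneg f)
      _ = C * ‖f‖ * ‖T.adjoint g‖ := by rw [hTp]; ring
  -- Riesz representation
  set A : T.adjoint.domain →ₗ[ℂ] H₁ := T.adjoint.toFun with hA
  set φ : T.adjoint.domain →ₗ[ℂ] ℂ :=
    (innerSL ℂ f).toLinearMap.comp (T.adjoint.domain.subtype) with hφ
  have hφapp : ∀ g : T.adjoint.domain, φ g = ⟪f, (g:H₂)⟫ := fun g => rfl
  have hker : LinearMap.ker A ≤ LinearMap.ker φ := by
    intro g hg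
    rw [LinearMap.mem_ker] at hg ⊢
    have h1 := hkey g
    have h2 : ‖T.adjoint g‖ = 0 := by
      show ‖A g‖ = 0; rw [hg, norm_zero]
    rw [h2, mul_zero] at h1
    have := le_antisymm h1 (norm_nonneg _)
    rw [hφapp g]
    exact norm_eq_zero.mp this
  set ℓ₀ : LinearMap.range A →ₗ[ℂ] ℂ :=
    ((LinearMap.ker A).liftQ φ hker).comp A.quotKerEquivRange.symm.toLinearMap with hℓ₀
  have hℓ₀app : ∀ g : T.adjoint.domain,
      ℓ₀ ⟨A g, LinearMap.mem_range_self A g⟩ = ⟪f, (g:H₂)⟫ := by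
    intro g
    have h1 : A.quotKerEquivRange.symm ⟨A g, LinearMap.mem_range_self A g⟩
        = Submodule.Quotient.mk g := A.quotKerEquivRange_symm_apply_image g _
    simp only [hℓ₀, LinearMap.comp_apply, LinearEquiv.coe_toLinearMap]
    rw [h1]
    exact (Submodule.liftQ_apply _ φ g).trans (hφapp g)
  have hbound : ∀ x : LinearMap.range A, ‖ℓ₀ x‖ ≤ (C * ‖f‖) * ‖x‖ := by
    rintro ⟨x, hx⟩
    obtain ⟨g, rfl⟩ := hx
    rw [hℓ₀app g]
    exact hkey g
  set ℓ : LinearMap.range A →L[ℂ] ℂ := ℓ₀.mkContinuous (C * ‖f‖) hbound with hℓ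
  obtain ⟨Φ, hΦ, -⟩ := exists_extension_norm_eq (LinearMap.range A) ℓ
  set u₁ : H₁ := (InnerProductSpace.toDual ℂ H₁).symm Φ with hu₁
  have hrep : ∀ g : T.adjoint.domain, ⟪u₁, T.adjoint g⟫ = ⟪f, (g:H₂)⟫ := by
    intro g
    have h1 : ⟪u₁, A g⟫ = Φ (A g) := InnerProductSpace.toDual_symm_apply
    have h2 : Φ (A g) = ℓ ⟨A g, LinearMap.mem_range_self A g⟩ :=
      hΦ ⟨A g, LinearMap.mem_range_self A g⟩
    have h3 : ℓ ⟨A g, LinearMap.mem_range_self A g⟩ = ⟪f, (g:H₂)⟫ := hℓ₀app g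
    exact h1.trans (h2.trans h3)
  have hgraph : (u₁, f) ∈ T.graph := mem_graph_of_orth T hdense hclosed u₁ f hrep
  rw [T.mem_graph_iff] at hgraph
  obtain ⟨x₀, hx₀coe, hx₀T⟩ := hgraph
  -- kernel projection
  set N := (LinearMap.ker T.toFun).map T.domain.subtype with hNdef
  have hNc : IsClosed (N : Set H₁) := ker_map_closed T hclosed
  haveI : CompleteSpace N := hNc.completeSpace_coe
  set w : H₁ := (Submodule.orthogonalProjection N (x₀ : H₁) : H₁) with hw
  obtain ⟨y, hy, hyw⟩ := (Submodule.orthogonalProjection N (x₀ : H₁)).2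
  have hyw' : (y : H₁) = w := hyw
  have hwdom : w ∈ T.domain := hyw' ▸ y.2
  have hTy : T y = 0 := hy
  set u : H₁ := (x₀ : H₁) - w with hu
  have hudom : u ∈ T.domain := T.domain.sub_mem x₀.2 hwdom
  have huorth : u ∈ Nᗮ := Submodule.sub_starProjection_mem_orthogonal _
  have hTu : T ⟨u, hudom⟩ = f := by
    have h2 : (⟨u, hudom⟩ : T.domain) = x₀ - y := by
      apply Subtype.ext
      show (x₀ : H₁) - w = (x₀ : H₁) - (y : H₁)
      rw [hyw']
    rw [h2, T.map_sub, hx₀T, hTy, sub_zero]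
  have huniq : ∀ (u' : H₁) (hu' : u' ∈ T.domain), u' ∈ Nᗮ → T ⟨u', hu'⟩ = f → u' = u := by
    intro u' hu' hu'orth hTu'
    have hd : u' - u ∈ T.domain := T.domain.sub_mem hu' hudom
    have h0 : T ⟨u' - u, hd⟩ = 0 := by
      have h3 : (⟨u' - u, hd⟩ : T.domain) = ⟨u', hu'⟩ - ⟨u, hudom⟩ := rfl
      rw [h3, T.map_sub, hTu', hTu, sub_self]
    have hmemN : u' - u ∈ N := ⟨⟨u' - u, hd⟩, h0, rfl⟩
    have hmemO : u' - u ∈ Nᗮ := Submodule.sub_mem _ hu'orth huorth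
    have h4 : (⟪u' - u, u' - u⟫ : ℂ) = 0 :=
      (Submodule.mem_orthogonal' N _).mp hmemO _ hmemN
    exact sub_eq_zero.mp (inner_self_eq_zero.mp h4)
  refine ⟨u, hudom, huorth, hTu, huniq, ?_⟩
  ext x
  simp only [Set.mem_setOf_eq]
  constructor
  · rintro ⟨hx, hTx⟩
    have hd : x - u ∈ T.domain := T.domain.sub_mem hx hudom
    have h0 : T ⟨x - u, hd⟩ = 0 := by
      have h3 : (⟨x - u, hd⟩ : T.domain) = ⟨x, hx⟩ - ⟨u, hudom⟩ := rfl
      rw [h3, T.map_sub, hTx, hTu, sub_self]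
    exact ⟨x - u, ⟨⟨x - u, hd⟩, h0, rfl⟩, by abel⟩
  · rintro ⟨v, hvN, rfl⟩
    obtain ⟨z, hz, hzv⟩ := hvN
    have hzv' : (z : H₁) = v := hzv
    have hvdom : v ∈ T.domain := hzv' ▸ z.2
    have hd : u + v ∈ T.domain := T.domain.add_mem hudom hvdom
    refine ⟨hd, ?_⟩
    have h3 : (⟨u + v, hd⟩ : T.domain) = ⟨u, hudom⟩ + z := by
      apply Subtype.ext
      show u + v = u + (z : H₁)
      rw [hzv']
    rw [h3, T.map_add, hTu, show T z = 0 from hz, add_zero]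
end

section
/- With $\mathcal{N}$ the infinite product of planar Gaussians with standard deviations $a_i$ satisfying $\sum_i a_i < 1$, the set $\ell^{\infty}$ of bounded complex sequences satisfies $\mathcal{N}(\ell^{\infty}) = 1$. -/
open MeasureTheory ProbabilityTheory

/-- The centered Gaussian measure on `ℂ ≅ ℝ²` with standard deviation `a` in each
real coordinate. -/
noncomputable def planarGaussian (a : ℝ) : Measure ℂ :=
  ((gaussianReal 0 (a ^ 2).toNNReal).prod (gaussianReal 0 (a ^ 2).toNNReal)).map
    (fun q : ℝ × ℝ => Complex.equivRealProd.symm q)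

open Real Set Filter

lemma integral_mul_exp_neg_mul_sq_Ioi' {b : ℝ} (hb : 0 < b) :
    ∫ r in Set.Ioi (0 : ℝ), r * Real.exp (-b * r ^ 2) = (2 * b)⁻¹ := by
  have hb' : (2 : ℝ) * b ≠ 0 := by positivity
  have A : ∀ x ∈ Set.Ici (0 : ℝ), HasDerivAt (fun x => -(2 * b)⁻¹ * Real.exp (-b * x ^ 2))
      (x * Real.exp (-b * x ^ 2)) x := by
    intro x _
    refine (((hasDerivAt_pow 2 x).const_mul (-b)).exp.const_mul (-(2 * b)⁻¹)).congr_deriv ?_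
    field_simp
    ring
  have B : Filter.Tendsto (fun y : ℝ => -(2 * b)⁻¹ * Real.exp (-b * y ^ 2)) Filter.atTop
      (nhds (-(2 * b)⁻¹ * 0)) := by
    refine Filter.Tendsto.const_mul _ ?_
    refine Real.tendsto_exp_atBot.comp ?_
    exact (tendsto_pow_atTop two_ne_zero).const_mul_atTop_of_neg (neg_lt_zero.2 hb)
  have h := integral_Ioi_of_hasDerivAt_of_tendsto' A
    ((integrable_mul_exp_neg_mul_sq hb).integrableOn) B
  rw [h]
  simp [Real.exp_zero]

lemma gaussianReal_Ici_one_le {a : ℝ} (ha : 0 < a) :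
    gaussianReal 0 (a ^ 2).toNNReal (Set.Ici 1) ≤ ENNReal.ofReal (a / 2) := by
  set v : NNReal := (a ^ 2).toNNReal with hv_def
  have hv_coe : (v : ℝ) = a ^ 2 := Real.coe_toNNReal _ (sq_nonneg a)
  have hv_pos : (0 : ℝ) < v := by rw [hv_coe]; positivity
  have hv : v ≠ 0 := by
    intro h
    rw [h] at hv_pos
    simp at hv_pos
  have hb : (0 : ℝ) < (2 * (v : ℝ))⁻¹ := by positivity
  set b : ℝ := (2 * (v : ℝ))⁻¹ with hb_def
  -- rewrite the density
  have hfun : ∀ x : ℝ, x * gaussianPDFReal 0 v x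
      = (Real.sqrt (2 * Real.pi * v))⁻¹ * (x * Real.exp (-b * x ^ 2)) := by
    intro x
    rw [gaussianPDFReal]
    have : -(x - 0) ^ 2 / (2 * (v : ℝ)) = -b * x ^ 2 := by
      rw [hb_def, div_eq_mul_inv]
      ring
    rw [this]
    ring
  have hint : Integrable (fun x : ℝ => x * gaussianPDFReal 0 v x) := by
    have : Integrable (fun x : ℝ =>
        (Real.sqrt (2 * Real.pi * v))⁻¹ * (x * Real.exp (-b * x ^ 2))) :=
      (integrable_mul_exp_neg_mul_sq hb).const_mul _
    exact this.congr (Filter.Eventually.of_forall fun x => (hfun x).symm)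
  -- the measure of the upper tail
  rw [gaussianReal_apply 0 hv]
  have step1 : ∫⁻ x in Set.Ici (1 : ℝ), gaussianPDF 0 v x
      ≤ ∫⁻ x in Set.Ici (1 : ℝ), ENNReal.ofReal (x * gaussianPDFReal 0 v x) := by
    refine setLIntegral_mono ((measurable_id.mul (measurable_gaussianPDFReal 0 v)).ennreal_ofReal)
      fun x hx => ?_
    rw [gaussianPDF]
    exact ENNReal.ofReal_le_ofReal
      (le_mul_of_one_le_left (gaussianPDFReal_nonneg 0 v x) hx)
  have step2 : ∫⁻ x in Set.Ici (1 : ℝ), ENNReal.ofReal (x * gaussianPDFReal 0 v x)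
      ≤ ∫⁻ x in Set.Ioi (0 : ℝ), ENNReal.ofReal (x * gaussianPDFReal 0 v x) :=
    lintegral_mono_set (fun x hx => Set.mem_Ioi.mpr (lt_of_lt_of_le one_pos hx))
  have step3 : ∫⁻ x in Set.Ioi (0 : ℝ), ENNReal.ofReal (x * gaussianPDFReal 0 v x)
      = ENNReal.ofReal (∫ x in Set.Ioi (0 : ℝ), x * gaussianPDFReal 0 v x) := by
    rw [ofReal_integral_eq_lintegral_ofReal hint.integrableOn]
    refine (ae_restrict_iff' measurableSet_Ioi).mpr (Filter.Eventually.of_forall fun x hx => ?_)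
    exact mul_nonneg (le_of_lt hx) (gaussianPDFReal_nonneg 0 v x)
  have hval : ∫ x in Set.Ioi (0 : ℝ), x * gaussianPDFReal 0 v x
      = (Real.sqrt (2 * Real.pi * v))⁻¹ * (2 * b)⁻¹ := by
    simp_rw [hfun]
    rw [MeasureTheory.integral_const_mul, integral_mul_exp_neg_mul_sq_Ioi' hb]
  have hbound : (Real.sqrt (2 * Real.pi * v))⁻¹ * (2 * b)⁻¹ ≤ a / 2 := by
    have h2b : (2 * b)⁻¹ = (v : ℝ) := by
      rw [hb_def]
      field_simp
    have hsqrt : Real.sqrt (2 * Real.pi * v) = Real.sqrt (2 * Real.pi) * a := by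
      rw [hv_coe, Real.sqrt_mul (by positivity), Real.sqrt_sq ha.le]
    have h2pi : (2 : ℝ) ≤ Real.sqrt (2 * Real.pi) := by
      have hpi := Real.pi_gt_three
      nlinarith [Real.sq_sqrt (show (0:ℝ) ≤ 2 * Real.pi by positivity),
        Real.sqrt_nonneg (2 * Real.pi)]
    rw [h2b, hsqrt, hv_coe]
    rw [inv_mul_eq_div, div_le_div_iff₀ (by nlinarith) (by norm_num)]
    nlinarith
  calc ∫⁻ x in Set.Ici (1 : ℝ), gaussianPDF 0 v x
      ≤ ENNReal.ofReal (∫ x in Set.Ioi (0 : ℝ), x * gaussianPDFReal 0 v x) := by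
        rw [← step3]; exact le_trans step1 step2
    _ ≤ ENNReal.ofReal (a / 2) := by
        rw [hval]; exact ENNReal.ofReal_le_ofReal hbound

lemma gaussianReal_abs_tail_le {a : ℝ} (ha : 0 < a) :
    gaussianReal 0 (a ^ 2).toNNReal {x : ℝ | 1 ≤ |x|} ≤ ENNReal.ofReal a := by
  set v : NNReal := (a ^ 2).toNNReal with hv_def
  have hsymm : gaussianReal 0 v (Set.Iic (-1 : ℝ)) = gaussianReal 0 v (Set.Ici (1 : ℝ)) := by
    have hmap : Measure.map (fun x : ℝ => (-1 : ℝ) * x) (gaussianReal 0 v) = gaussianReal 0 v := by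
      have h := gaussianReal_map_const_mul (μ := 0) (v := v) (-1 : ℝ)
      rw [h]
      congr 1
      · norm_num
      · apply NNReal.coe_injective
        push_cast
        norm_num
    have := Measure.map_apply (f := fun x : ℝ => (-1 : ℝ) * x)
      (measurable_id.const_mul _) (μ := gaussianReal 0 v) measurableSet_Ici (s := Set.Ici (1 : ℝ))
    rw [hmap] at this
    rw [this]
    congr 1
    ext x
    simp only [Set.mem_preimage, Set.mem_Ici, Set.mem_Iic]
    constructor
    · intro h; linarith
    · intro h; linarith
  have hsub : {x : ℝ | 1 ≤ |x|} ⊆ Set.Iic (-1 : ℝ) ∪ Set.Ici (1 : ℝ) := by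
    intro x hx
    simp only [Set.mem_setOf_eq] at hx
    rcases le_abs.mp hx with h | h
    · exact Or.inr h
    · exact Or.inl (by simpa [Set.mem_Iic] using by linarith)
  calc gaussianReal 0 v {x : ℝ | 1 ≤ |x|}
      ≤ gaussianReal 0 v (Set.Iic (-1 : ℝ) ∪ Set.Ici (1 : ℝ)) := measure_mono hsub
    _ ≤ gaussianReal 0 v (Set.Iic (-1 : ℝ)) + gaussianReal 0 v (Set.Ici (1 : ℝ)) :=
        measure_union_le _ _
    _ = gaussianReal 0 v (Set.Ici (1 : ℝ)) + gaussianReal 0 v (Set.Ici (1 : ℝ)) := by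
        rw [hsymm]
    _ ≤ ENNReal.ofReal (a / 2) + ENNReal.ofReal (a / 2) := by
        gcongr <;> exact gaussianReal_Ici_one_le ha
    _ = ENNReal.ofReal a := by
        rw [← ENNReal.ofReal_add (by positivity) (by positivity)]
        norm_num

lemma measurable_equivRealProd_symm :
    Measurable fun q : ℝ × ℝ => Complex.equivRealProd.symm q := by
  simp only [Complex.equivRealProd_symm_apply]
  exact (Complex.measurable_ofReal.comp measurable_fst).add
    ((Complex.measurable_ofReal.comp measurable_snd).mul_const Complex.I)

lemma measurableSet_re_tail : MeasurableSet {w : ℂ | 1 ≤ |w.re|} :=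
  measurableSet_le measurable_const Complex.measurable_re.abs

lemma measurableSet_im_tail : MeasurableSet {w : ℂ | 1 ≤ |w.im|} :=
  measurableSet_le measurable_const Complex.measurable_im.abs

lemma planarGaussian_re_tail_le {a : ℝ} (ha : 0 < a) :
    planarGaussian a {w : ℂ | 1 ≤ |w.re|} ≤ ENNReal.ofReal a := by
  rw [planarGaussian, Measure.map_apply measurable_equivRealProd_symm measurableSet_re_tail]
  have hpre : (fun q : ℝ × ℝ => Complex.equivRealProd.symm q) ⁻¹' {w : ℂ | 1 ≤ |w.re|}
      = {x : ℝ | 1 ≤ |x|} ×ˢ (Set.univ : Set ℝ) := by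
    ext q
    simp [Complex.equivRealProd_symm_apply, Set.mem_prod]
  rw [hpre, Measure.prod_prod, measure_univ, mul_one]
  exact gaussianReal_abs_tail_le ha

lemma planarGaussian_im_tail_le {a : ℝ} (ha : 0 < a) :
    planarGaussian a {w : ℂ | 1 ≤ |w.im|} ≤ ENNReal.ofReal a := by
  rw [planarGaussian, Measure.map_apply measurable_equivRealProd_symm measurableSet_im_tail]
  have hpre : (fun q : ℝ × ℝ => Complex.equivRealProd.symm q) ⁻¹' {w : ℂ | 1 ≤ |w.im|}
      = (Set.univ : Set ℝ) ×ˢ {x : ℝ | 1 ≤ |x|} := by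
    ext q
    simp [Complex.equivRealProd_symm_apply, Set.mem_prod]
  rw [hpre, Measure.prod_prod, measure_univ, one_mul]
  exact gaussianReal_abs_tail_le ha

theorem gaussian_product_measure_linfty_full
    (a : ℕ → ℝ) (ha : ∀ i, 0 < a i) (hsummable : Summable a) (hsum : ∑' i, a i < 1)
    (N : Measure (ℕ → ℂ)) [IsProbabilityMeasure N]
    (hindep : iIndepFun (fun i (z : ℕ → ℂ) => z i) N)
    (hmarg : ∀ i, N.map (fun z : ℕ → ℂ => z i) = planarGaussian (a i)) :
    N {z : ℕ → ℂ | ∃ C : ℝ, ∀ n, max |(z n).re| |(z n).im| ≤ C} = 1 := by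
  set S : Set (ℕ → ℂ) := {z : ℕ → ℂ | ∃ C : ℝ, ∀ n, max |(z n).re| |(z n).im| ≤ C} with hS_def
  set A : ℕ → Set (ℕ → ℂ) := fun n => {z : ℕ → ℂ | 1 < max |(z n).re| |(z n).im|} with hA_def
  -- bound the measure of each `A n`
  have key : ∀ n, N (A n) ≤ ENNReal.ofReal (2 * a n) := by
    intro n
    have hre : N {z : ℕ → ℂ | 1 ≤ |(z n).re|} ≤ ENNReal.ofReal (a n) := by
      have : N {z : ℕ → ℂ | 1 ≤ |(z n).re|}
          = (N.map (fun z : ℕ → ℂ => z n)) {w : ℂ | 1 ≤ |w.re|} := by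
        rw [Measure.map_apply (measurable_pi_apply n) measurableSet_re_tail]
        rfl
      rw [this, hmarg n]
      exact planarGaussian_re_tail_le (ha n)
    have him : N {z : ℕ → ℂ | 1 ≤ |(z n).im|} ≤ ENNReal.ofReal (a n) := by
      have : N {z : ℕ → ℂ | 1 ≤ |(z n).im|}
          = (N.map (fun z : ℕ → ℂ => z n)) {w : ℂ | 1 ≤ |w.im|} := by
        rw [Measure.map_apply (measurable_pi_apply n) measurableSet_im_tail]
        rfl
      rw [this, hmarg n]
      exact planarGaussian_im_tail_le (ha n)
    have hsub : A n ⊆ {z : ℕ → ℂ | 1 ≤ |(z n).re|} ∪ {z : ℕ → ℂ | 1 ≤ |(z n).im|} := by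
      intro z hz
      simp only [hA_def, Set.mem_setOf_eq] at hz
      rcases lt_max_iff.mp hz with h | h
      · exact Or.inl h.le
      · exact Or.inr h.le
    calc N (A n) ≤ N ({z : ℕ → ℂ | 1 ≤ |(z n).re|} ∪ {z : ℕ → ℂ | 1 ≤ |(z n).im|}) :=
          measure_mono hsub
      _ ≤ N {z : ℕ → ℂ | 1 ≤ |(z n).re|} + N {z : ℕ → ℂ | 1 ≤ |(z n).im|} :=
          measure_union_le _ _
      _ ≤ ENNReal.ofReal (a n) + ENNReal.ofReal (a n) := by gcongr
      _ = ENNReal.ofReal (2 * a n) := by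
          rw [← ENNReal.ofReal_add (ha n).le (ha n).le, two_mul]
  -- the sum of measures is finite
  have htsum : ∑' n, N (A n) ≠ ⊤ := by
    have h1 : ∑' n, N (A n) ≤ ∑' n, ENNReal.ofReal (2 * a n) := ENNReal.tsum_le_tsum key
    have h2 : ∑' n, ENNReal.ofReal (2 * a n) = ENNReal.ofReal (∑' n, 2 * a n) :=
      (ENNReal.ofReal_tsum_of_nonneg (fun n => mul_nonneg (by norm_num) (ha n).le) (hsummable.mul_left 2)).symm
    exact ne_top_of_le_ne_top (by rw [h2]; exact ENNReal.ofReal_ne_top) h1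
  -- first Borel–Cantelli
  have hfin : ∀ᵐ z ∂N, {n : ℕ | z ∈ A n}.Finite := ae_finite_setOf_mem htsum
  -- finitely many exceedances implies boundedness
  have hsub : {z : ℕ → ℂ | {n : ℕ | z ∈ A n}.Finite} ⊆ S := by
    intro z hz
    classical
    set t : Finset ℕ := hz.toFinset with ht_def
    refine ⟨1 + ∑ k ∈ t, max |(z k).re| |(z k).im|, fun n => ?_⟩
    have hnonneg : ∀ k, 0 ≤ max |(z k).re| |(z k).im| :=
      fun k => le_trans (abs_nonneg _) (le_max_left _ _)
    by_cases hn : z ∈ A n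
    · have hmem : n ∈ t := by
        rw [ht_def, Set.Finite.mem_toFinset]
        exact hn
      have := Finset.single_le_sum (f := fun k => max |(z k).re| |(z k).im|)
        (fun k _ => hnonneg k) hmem
      linarith
    · have h1 : max |(z n).re| |(z n).im| ≤ 1 := not_lt.mp hn
      have h2 : 0 ≤ ∑ k ∈ t, max |(z k).re| |(z k).im| :=
        Finset.sum_nonneg fun k _ => hnonneg k
      linarith
  -- conclude
  have hScompl : N Sᶜ = 0 := by
    refine measure_mono_null ?_ (ae_iff.mp hfin)
    intro z hz
    simp only [Set.mem_setOf_eq, Set.mem_compl_iff] at hz ⊢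
    exact fun h => hz (hsub h)
  have hge : 1 ≤ N S := by
    calc (1 : ENNReal) = N Set.univ := (measure_univ).symm
      _ = N (S ∪ Sᶜ) := by rw [Set.union_compl_self]
      _ ≤ N S + N Sᶜ := measure_union_le _ _
      _ = N S := by rw [hScompl, add_zero]
  exact le_antisymm prob_le_one hge
end

section
/- Let $P$ be the Gaussian product probability measure on $\ell^p$ (restriction of $\mathcal{N}$ with $\sum_i a_i < 1$), $p \in [1,\infty)$. Then $\int_{\ell^p} e^{\|\mathbf{z}\|_{\ell^1}}\, dP(\mathbf{z}) \le e^{\sum_{k=1}^{\infty}\left(a_k^2 + \frac{2\sqrt{2}}{\sqrt{\pi}} a_k\right)} < \infty$. -/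
open MeasureTheory ProbabilityTheory Real Set
open scoped ENNReal NNReal

namespace GaussHelper

variable {a : ℝ}

lemma coe_sq : ((a^2).toNNReal : ℝ) = a ^ 2 :=
  Real.coe_toNNReal _ (sq_nonneg a)

lemma sq_ne_zero (ha : 0 < a) : (a^2).toNNReal ≠ 0 := by
  simp only [ne_eq, Real.toNNReal_eq_zero, not_le]
  positivity

lemma mul_exp_eq (ha : 0 < a) (t x : ℝ) :
    gaussianPDFReal 0 (a^2).toNNReal x * rexp (t * x)
      = rexp (t^2 * a^2 / 2) * gaussianPDFReal (t * a^2) (a^2).toNNReal x := by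
  simp only [gaussianPDFReal, coe_sq, sub_zero]
  rw [mul_assoc, ← Real.exp_add, mul_left_comm, ← Real.exp_add]
  congr 1
  have h : a ^ 2 ≠ 0 := by positivity
  field_simp
  ring

lemma setIntegral_Ici_comp_sub (f : ℝ → ℝ) (b c : ℝ) :
    ∫ x in Ici b, f (x - c) = ∫ x in Ici (b - c), f x := by
  rw [← integral_indicator measurableSet_Ici, ← integral_indicator measurableSet_Ici,
    ← integral_add_right_eq_self ((Ici b).indicator (fun y => f (y - c))) c]
  congr 1
  funext x
  simp only [Set.indicator, mem_Ici, sub_le_iff_le_add, add_sub_cancel_right]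

lemma setIntegral_Iio_comp_sub (f : ℝ → ℝ) (b c : ℝ) :
    ∫ x in Iio b, f (x - c) = ∫ x in Iio (b - c), f x := by
  rw [← integral_indicator measurableSet_Iio, ← integral_indicator measurableSet_Iio,
    ← integral_add_right_eq_self ((Iio b).indicator (fun y => f (y - c))) c]
  congr 1
  funext x
  simp only [Set.indicator, mem_Iio, ← lt_sub_iff_add_lt, add_sub_cancel_right]

lemma integral_gaussianReal_eq {v : NNReal} (hv : v ≠ 0) (f : ℝ → ℝ) :
    ∫ x, f x ∂(gaussianReal 0 v) = ∫ x, gaussianPDFReal 0 v x * f x := by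
  rw [gaussianReal_of_var_ne_zero _ hv, gaussianPDF_def]
  have h1 : (fun x => ENNReal.ofReal (gaussianPDFReal 0 v x))
      = fun x => ((fun x => (gaussianPDFReal 0 v x).toNNReal) x : ℝ≥0∞) := rfl
  rw [h1, integral_withDensity_eq_integral_smul ((measurable_gaussianPDFReal 0 v).real_toNNReal)]
  congr 1
  funext x
  simp [NNReal.smul_def, Real.coe_toNNReal _ (gaussianPDFReal_nonneg 0 v x)]

lemma abs_bound (ha : 0 < a) (x : ℝ) :
    gaussianPDFReal 0 (a^2).toNNReal x * rexp |x|
      ≤ rexp (a^2/2) * gaussianPDFReal (a^2) (a^2).toNNReal x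
        + rexp (a^2/2) * gaussianPDFReal (-a^2) (a^2).toNNReal x := by
  rcases le_or_gt 0 x with hx | hx
  · rw [abs_of_nonneg hx]
    have h := mul_exp_eq ha 1 x
    simp only [one_pow, one_mul] at h
    rw [h]
    have : 0 ≤ rexp (a^2/2) * gaussianPDFReal (-a^2) (a^2).toNNReal x :=
      mul_nonneg (exp_nonneg _) (gaussianPDFReal_nonneg _ _ _)
    linarith
  · rw [abs_of_neg hx]
    have h := mul_exp_eq ha (-1) x
    simp only [neg_one_sq, one_mul, neg_one_mul] at h
    rw [h]
    have : 0 ≤ rexp (a^2/2) * gaussianPDFReal (a^2) (a^2).toNNReal x :=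
      mul_nonneg (exp_nonneg _) (gaussianPDFReal_nonneg _ _ _)
    linarith

lemma integrable_pdf_mul_exp_abs (ha : 0 < a) :
    Integrable (fun x => gaussianPDFReal 0 (a^2).toNNReal x * rexp |x|) := by
  refine Integrable.mono'
    (g := fun x => rexp (a^2/2) * gaussianPDFReal (a^2) (a^2).toNNReal x
        + rexp (a^2/2) * gaussianPDFReal (-a^2) (a^2).toNNReal x)
    (((integrable_gaussianPDFReal _ _).const_mul _).add
      ((integrable_gaussianPDFReal _ _).const_mul _))
    (((measurable_gaussianPDFReal 0 _).mul
      (continuous_exp.comp continuous_abs).measurable).aestronglyMeasurable)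
    (ae_of_all _ fun x => ?_)
  rw [Real.norm_eq_abs, abs_of_nonneg (mul_nonneg (gaussianPDFReal_nonneg _ _ _) (exp_nonneg _))]
  exact abs_bound ha x

lemma integrable_exp_abs (ha : 0 < a) :
    Integrable (fun x => rexp |x|) (gaussianReal 0 (a^2).toNNReal) := by
  rw [gaussianReal_of_var_ne_zero _ (sq_ne_zero ha), gaussianPDF_def,
    integrable_withDensity_iff (measurable_gaussianPDFReal 0 _).ennreal_ofReal
      (ae_of_all _ fun x => ENNReal.ofReal_lt_top)]
  have heq : (fun x => rexp |x| * (ENNReal.ofReal (gaussianPDFReal 0 (a^2).toNNReal x)).toReal)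
      = fun x => gaussianPDFReal 0 (a^2).toNNReal x * rexp |x| := by
    funext x
    rw [ENNReal.toReal_ofReal (gaussianPDFReal_nonneg _ _ _), mul_comm]
  rw [heq]
  exact integrable_pdf_mul_exp_abs ha

lemma integral_exp_abs_le (ha : 0 < a) :
    ∫ x, rexp |x| ∂(gaussianReal 0 (a^2).toNNReal)
      ≤ rexp (a^2/2 + Real.sqrt 2 / Real.sqrt π * a) := by
  have hv : (a^2).toNNReal ≠ 0 := sq_ne_zero ha
  rw [integral_gaussianReal_eq hv]
  set q : ℝ → ℝ := gaussianPDFReal 0 (a^2).toNNReal with hq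
  have hqi : Integrable q := integrable_gaussianPDFReal _ _
  have hint := integrable_pdf_mul_exp_abs ha
  have hsplit : ∫ x, q x * rexp |x|
      = (∫ x in Iio 0, q x * rexp |x|) + ∫ x in Ici 0, q x * rexp |x| :=
    (intervalIntegral.integral_Iio_add_Ici hint.integrableOn hint.integrableOn).symm
  have hIci : ∫ x in Ici 0, q x * rexp |x| = rexp (a^2/2) * ∫ x in Ici (-a^2), q x := by
    rw [setIntegral_congr_fun measurableSet_Ici
      (g := fun x => rexp (a^2/2) * q (x - a^2)) (fun x hx => ?_)]
    · rw [integral_const_mul, setIntegral_Ici_comp_sub q 0 (a^2), zero_sub]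
    · rw [abs_of_nonneg hx]
      have h := mul_exp_eq ha 1 x
      simp only [one_pow, one_mul] at h
      have hs : q (x - a^2) = gaussianPDFReal (a^2) (a^2).toNNReal x := by
        rw [hq, gaussianPDFReal_sub, zero_add]
      simp only [hq] at h ⊢
      rw [h, ← hs]
  have hIio : ∫ x in Iio 0, q x * rexp |x| = rexp (a^2/2) * ∫ x in Iio (a^2), q x := by
    rw [setIntegral_congr_fun measurableSet_Iio
      (g := fun x => rexp (a^2/2) * q (x - (-a^2))) (fun x hx => ?_)]
    · rw [integral_const_mul, setIntegral_Iio_comp_sub q 0 (-a^2), zero_sub, neg_neg]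
    · rw [abs_of_neg hx]
      have h := mul_exp_eq ha (-1) x
      simp only [neg_one_sq, one_mul, neg_one_mul] at h
      have hs : q (x - (-a^2)) = gaussianPDFReal (-a^2) (a^2).toNNReal x := by
        rw [hq, gaussianPDFReal_sub, zero_add]
      simp only [hq] at h ⊢
      rw [h, ← hs]
  have haa : -a^2 ≤ a^2 := by nlinarith
  have hIio2 : ∫ x in Iio (a^2), q x
      = (∫ x in Iio (-a^2), q x) + ∫ x in Ico (-a^2) (a^2), q x := by
    rw [← setIntegral_union ((Set.Iio_disjoint_Ici le_rfl).mono_right Set.Ico_subset_Ici_self)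
      measurableSet_Ico hqi.integrableOn hqi.integrableOn, Iio_union_Ico_eq_Iio haa]
  have hone : (∫ x in Iio (-a^2), q x) + ∫ x in Ici (-a^2), q x = 1 := by
    rw [intervalIntegral.integral_Iio_add_Ici hqi.integrableOn hqi.integrableOn]
    exact integral_gaussianPDFReal_eq_one 0 hv
  have hK : ∫ x in Ico (-a^2) (a^2), q x ≤ Real.sqrt 2 / Real.sqrt π * a := by
    have hqK : ∀ x ∈ Ico (-a^2) (a^2), ‖q x‖ ≤ (Real.sqrt (2 * π * a^2))⁻¹ := by
      intro x _
      rw [Real.norm_eq_abs, abs_of_nonneg (gaussianPDFReal_nonneg _ _ _)]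
      show gaussianPDFReal 0 (a^2).toNNReal x ≤ _
      simp only [gaussianPDFReal, coe_sq, sub_zero]
      calc (Real.sqrt (2 * π * a^2))⁻¹ * rexp (-x^2 / (2 * a^2))
          ≤ (Real.sqrt (2 * π * a^2))⁻¹ * 1 := by
            refine mul_le_mul_of_nonneg_left ?_ (by positivity)
            rw [← Real.exp_zero]
            exact Real.exp_le_exp.mpr
              (div_nonpos_of_nonpos_of_nonneg (neg_nonpos.mpr (sq_nonneg x)) (by positivity))
        _ = (Real.sqrt (2 * π * a^2))⁻¹ := mul_one _
    have hb := norm_setIntegral_le_of_norm_le_const (μ := volume)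
      (by rw [Real.volume_Ico]; exact ENNReal.ofReal_lt_top) hqK
    have hvol : volume.real (Ico (-a^2) (a^2)) = 2 * a^2 := by
      show (volume (Ico (-a^2) (a^2))).toReal = _
      rw [Real.volume_Ico, ENNReal.toReal_ofReal (by nlinarith)]
      ring
    rw [hvol] at hb
    have hs2 : (0:ℝ) < Real.sqrt 2 := by positivity
    have hsp : (0:ℝ) < Real.sqrt π := Real.sqrt_pos.mpr Real.pi_pos
    have hmul : Real.sqrt 2 * Real.sqrt 2 = 2 := Real.mul_self_sqrt (by norm_num)
    have h2 : (Real.sqrt (2 * π * a^2))⁻¹ * (2 * a^2) = Real.sqrt 2 / Real.sqrt π * a := by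
      rw [show (2 : ℝ) * π * a^2 = (2 * π) * a^2 by ring, Real.sqrt_mul (by positivity),
        Real.sqrt_sq ha.le, Real.sqrt_mul (by norm_num)]
      field_simp
      linear_combination (-1 : ℝ) * hmul
    calc ∫ x in Ico (-a^2) (a^2), q x ≤ ‖∫ x in Ico (-a^2) (a^2), q x‖ := le_abs_self _
      _ ≤ (Real.sqrt (2 * π * a^2))⁻¹ * (2 * a^2) := hb
      _ = Real.sqrt 2 / Real.sqrt π * a := h2
  calc ∫ x, q x * rexp |x|
      = rexp (a^2/2) * (((∫ x in Iio (-a^2), q x) + ∫ x in Ici (-a^2), q x)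
          + ∫ x in Ico (-a^2) (a^2), q x) := by
        rw [hsplit, hIio, hIci, hIio2]; ring
    _ = rexp (a^2/2) * (1 + ∫ x in Ico (-a^2) (a^2), q x) := by rw [hone]
    _ ≤ rexp (a^2/2) * (1 + Real.sqrt 2 / Real.sqrt π * a) :=
        mul_le_mul_of_nonneg_left (by linarith) (exp_nonneg _)
    _ ≤ rexp (a^2/2) * rexp (Real.sqrt 2 / Real.sqrt π * a) := by
        refine mul_le_mul_of_nonneg_left ?_ (exp_nonneg _)
        linarith [Real.add_one_le_exp (Real.sqrt 2 / Real.sqrt π * a)]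
    _ = rexp (a^2/2 + Real.sqrt 2 / Real.sqrt π * a) := (Real.exp_add _ _).symm

end GaussHelper

namespace GaussHelper

lemma measurable_cesymm : Measurable (fun q : ℝ × ℝ => Complex.equivRealProd.symm q) :=
  Complex.measurableEquivRealProd.symm.measurable

lemma continuous_f : Continuous (fun w : ℂ => rexp (|w.re| + |w.im|)) :=
  Real.continuous_exp.comp
    ((continuous_abs.comp Complex.continuous_re).add (continuous_abs.comp Complex.continuous_im))

lemma comp_eq : ((fun w : ℂ => rexp (|w.re| + |w.im|))
      ∘ fun q : ℝ × ℝ => Complex.equivRealProd.symm q)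
    = fun q : ℝ × ℝ => rexp |q.1| * rexp |q.2| := by
  funext q
  simp [Function.comp, Complex.equivRealProd_symm_apply, Real.exp_add]

lemma integrable_planar {a : ℝ} (ha : 0 < a) :
    Integrable (fun w : ℂ => rexp (|w.re| + |w.im|)) (planarGaussian a) := by
  rw [planarGaussian,
    integrable_map_measure continuous_f.aestronglyMeasurable measurable_cesymm.aemeasurable,
    comp_eq]
  exact (integrable_exp_abs ha).mul_prod (integrable_exp_abs ha)

lemma integral_planar_le {a : ℝ} (ha : 0 < a) :
    ∫ w, rexp (|w.re| + |w.im|) ∂(planarGaussian a)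
      ≤ rexp (a^2 + 2 * Real.sqrt 2 / Real.sqrt π * a) := by
  have heq : ∫ w, rexp (|w.re| + |w.im|) ∂(planarGaussian a)
      = (∫ x, rexp |x| ∂(gaussianReal 0 (a^2).toNNReal))
        * ∫ x, rexp |x| ∂(gaussianReal 0 (a^2).toNNReal) := by
    rw [planarGaussian, integral_map measurable_cesymm.aemeasurable
      continuous_f.aestronglyMeasurable]
    calc ∫ q : ℝ × ℝ, rexp (|(Complex.equivRealProd.symm q).re| + |(Complex.equivRealProd.symm q).im|)
          ∂((gaussianReal 0 (a^2).toNNReal).prod (gaussianReal 0 (a^2).toNNReal))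
        = ∫ q : ℝ × ℝ, rexp |q.1| * rexp |q.2|
          ∂((gaussianReal 0 (a^2).toNNReal).prod (gaussianReal 0 (a^2).toNNReal)) := by
          rw [← comp_eq]; rfl
      _ = _ := integral_prod_mul (fun x => rexp |x|) (fun x => rexp |x|)
  rw [heq]
  have h := integral_exp_abs_le ha
  have hnn : 0 ≤ ∫ x, rexp |x| ∂(gaussianReal 0 (a^2).toNNReal) :=
    integral_nonneg fun x => le_of_lt (exp_pos _)
  calc (∫ x, rexp |x| ∂(gaussianReal 0 (a^2).toNNReal))
        * ∫ x, rexp |x| ∂(gaussianReal 0 (a^2).toNNReal)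
      ≤ rexp (a^2/2 + Real.sqrt 2 / Real.sqrt π * a)
        * rexp (a^2/2 + Real.sqrt 2 / Real.sqrt π * a) := mul_le_mul h h hnn (exp_nonneg _)
    _ = rexp (a^2 + 2 * Real.sqrt 2 / Real.sqrt π * a) := by
        rw [← Real.exp_add]; congr 1; ring

end GaussHelper


theorem gaussian_product_lintegral_exp_l1_norm
    (a : ℕ → ℝ) (ha : ∀ i, 0 < a i) (hsummable : Summable a) (hsum : ∑' i, a i < 1)
    (N : Measure (ℕ → ℂ)) [IsProbabilityMeasure N]
    (hindep : iIndepFun (fun i (z : ℕ → ℂ) => z i) N)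
    (hmarg : ∀ i, N.map (fun z : ℕ → ℂ => z i) = planarGaussian (a i)) :
    ∫⁻ z : ℕ → ℂ, ENNReal.ofReal (Real.exp (∑' n, (|(z n).re| + |(z n).im|))) ∂N
      ≤ ENNReal.ofReal
          (Real.exp (∑' k, (a k ^ 2 + 2 * Real.sqrt 2 / Real.sqrt Real.pi * a k))) := by
  classical
  set g : ℕ → (ℕ → ℂ) → ℝ := fun n z => |(z n).re| + |(z n).im| with hg
  have hgmeas : ∀ n, Measurable (g n) := fun n =>
    (Complex.measurable_re.comp (measurable_pi_apply n)).abs.add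
      (Complex.measurable_im.comp (measurable_pi_apply n)).abs
  have hgnn : ∀ (n) (z : ℕ → ℂ), 0 ≤ g n z := fun n z =>
    add_nonneg (abs_nonneg _) (abs_nonneg _)
  have hgindep : iIndepFun g N := by
    have h := hindep.comp (fun _ (w : ℂ) => |w.re| + |w.im|)
      (fun _ => Complex.measurable_re.abs.add Complex.measurable_im.abs)
    exact h
  have hfae : ∀ n : ℕ, AEStronglyMeasurable (fun w : ℂ => rexp (|w.re| + |w.im|))
      (N.map (fun z : ℕ → ℂ => z n)) := fun n => GaussHelper.continuous_f.aestronglyMeasurable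
  have hint : ∀ n, Integrable (fun z => rexp (g n z)) N := by
    intro n
    have h1 : Integrable (fun w : ℂ => rexp (|w.re| + |w.im|)) (N.map (fun z : ℕ → ℂ => z n)) := by
      rw [hmarg n]; exact GaussHelper.integrable_planar (ha n)
    exact (integrable_map_measure (hfae n) (measurable_pi_apply n).aemeasurable).mp h1
  have hcoord : ∀ n, ∫ z, rexp (g n z) ∂N
      ≤ rexp ((a n)^2 + 2 * Real.sqrt 2 / Real.sqrt π * (a n)) := by
    intro n
    have h1 := integral_map (φ := fun z : ℕ → ℂ => z n)
      (f := fun w : ℂ => rexp (|w.re| + |w.im|))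
      (measurable_pi_apply n).aemeasurable (hfae n)
    rw [hmarg n] at h1
    calc ∫ z, rexp (g n z) ∂N
        = ∫ w, rexp (|w.re| + |w.im|) ∂(planarGaussian (a n)) := h1.symm
      _ ≤ _ := GaussHelper.integral_planar_le (ha n)
  set c : ℕ → ℝ := fun k => (a k)^2 + 2 * Real.sqrt 2 / Real.sqrt π * (a k) with hc
  have hcnn : ∀ k, 0 ≤ c k := fun k =>
    add_nonneg (sq_nonneg _) (mul_nonneg (by positivity) (ha k).le)
  have hale : ∀ k, a k ≤ 1 := fun k =>
    le_trans (Summable.le_tsum hsummable k fun j _ => (ha j).le) hsum.le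
  have hsc : Summable c := by
    refine Summable.add (Summable.of_nonneg_of_le (fun k => sq_nonneg _)
      (fun k => ?_) hsummable) (hsummable.mul_left _)
    nlinarith [ha k, hale k]
  have hintsum : ∀ m : ℕ, Integrable (fun z => rexp (∑ n ∈ Finset.range m, g n z)) N := by
    intro m
    have h := hgindep.integrable_exp_mul_sum (t := 1) hgmeas (s := Finset.range m)
      (fun i _ => by simpa using hint i)
    simpa [Finset.sum_apply] using h
  have hintle : ∀ m : ℕ, ∫ z, rexp (∑ n ∈ Finset.range m, g n z) ∂N ≤ rexp (∑' k, c k) := by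
    intro m
    have hm := hgindep.mgf_sum (t := 1) hgmeas (Finset.range m)
    have hmgf_eq : mgf (∑ i ∈ Finset.range m, g i) N 1
        = ∫ z, rexp (∑ n ∈ Finset.range m, g n z) ∂N := by
      simp [mgf, Finset.sum_apply]
    have hmgfi : ∀ i, mgf (g i) N 1 = ∫ z, rexp (g i z) ∂N := by
      intro i; simp [mgf]
    calc ∫ z, rexp (∑ n ∈ Finset.range m, g n z) ∂N
        = ∏ i ∈ Finset.range m, mgf (g i) N 1 := by rw [← hmgf_eq, hm]
      _ ≤ ∏ i ∈ Finset.range m, rexp (c i) :=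
          Finset.prod_le_prod
            (fun i _ => by rw [hmgfi]; exact integral_nonneg fun z => (exp_pos _).le)
            (fun i _ => by rw [hmgfi]; exact hcoord i)
      _ = rexp (∑ i ∈ Finset.range m, c i) := (Real.exp_sum _ _).symm
      _ ≤ rexp (∑' k, c k) :=
          Real.exp_le_exp.mpr (Summable.sum_le_tsum _ (fun i _ => hcnn i) hsc)
  set F : ℕ → (ℕ → ℂ) → ℝ≥0∞ := fun m z =>
    ENNReal.ofReal (rexp (∑ n ∈ Finset.range m, g n z)) with hF
  have hFmeas : ∀ m, Measurable (F m) := fun m =>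
    (Measurable.exp (Finset.measurable_sum _ fun n _ => hgmeas n)).ennreal_ofReal
  have hFmono : Monotone F := by
    intro m m' hmm z
    exact ENNReal.ofReal_le_ofReal (Real.exp_le_exp.mpr
      (Finset.sum_le_sum_of_subset_of_nonneg (Finset.range_subset_range.mpr hmm)
        fun i _ _ => hgnn i z))
  have hpt : ∀ z : ℕ → ℂ,
      ENNReal.ofReal (rexp (∑' n, (|(z n).re| + |(z n).im|))) ≤ ⨆ m, F m z := by
    intro z
    by_cases hsz : Summable fun n => g n z
    · have ht : Filter.Tendsto (fun m => F m z) Filter.atTop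
          (nhds (ENNReal.ofReal (rexp (∑' n, g n z)))) :=
        (ENNReal.continuous_ofReal.tendsto _).comp
          ((Real.continuous_exp.tendsto _).comp hsz.hasSum.tendsto_sum_nat)
      exact le_of_tendsto' ht fun m => le_iSup (fun m => F m z) m
    · have h0 : (∑' n, (|(z n).re| + |(z n).im|)) = 0 := tsum_eq_zero_of_not_summable hsz
      rw [h0, Real.exp_zero]
      refine le_trans ?_ (le_iSup (fun m => F m z) 0)
      simp [hF]
  calc ∫⁻ z : ℕ → ℂ, ENNReal.ofReal (rexp (∑' n, (|(z n).re| + |(z n).im|))) ∂N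
      ≤ ∫⁻ z, ⨆ m, F m z ∂N := lintegral_mono hpt
    _ = ⨆ m, ∫⁻ z, F m z ∂N := lintegral_iSup hFmeas hFmono
    _ ≤ ENNReal.ofReal (rexp (∑' k, c k)) := by
        refine iSup_le fun m => ?_
        rw [hF, ← ofReal_integral_eq_lintegral_ofReal (hintsum m)
          (ae_of_all _ fun z => (exp_pos _).le)]
        exact ENNReal.ofReal_le_ofReal (hintle m)
end

section
/- (Fernique-type estimate) Let $p \in [1,\infty)$, $P$ the Gaussian product measure on $\ell^p$ with $\sum_i a_i < 1$, and $\varphi \in (\ell^p)^*$ a nonzero bounded linear functional. Then for every $\epsilon \le 1/\|\varphi\|_{(\ell^p)^*}$, $\int_{\ell^p} e^{\epsilon|\varphi(\mathbf{z})|}\, dP(\mathbf{z}) \le \int_{\ell^1} e^{\|\mathbf{z}\|_{\ell^1}}\, dP(\mathbf{z}) < \infty$. -/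
open MeasureTheory ProbabilityTheory
open scoped ENNReal

section FerniqueAuxSection
open Real
open scoped NNReal

namespace FerniqueAux


lemma meas_exp_mul (c : ℝ) : Measurable fun x : ℝ => ENNReal.ofReal (Real.exp (c * x)) := by
  apply Measurable.ennreal_ofReal; fun_prop

lemma aux_pdf_mul (v : ℝ≥0) (hv : v ≠ 0) (c x : ℝ) :
    gaussianPDFReal 0 v x * Real.exp (c * x)
      = Real.exp (c ^ 2 * v / 2) * gaussianPDFReal (c * v) v x := by
  have hv0 : (0:ℝ) < (v:ℝ) := by exact_mod_cast pos_iff_ne_zero.mpr hv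
  simp only [gaussianPDFReal]
  rw [mul_assoc, ← Real.exp_add, mul_left_comm, ← Real.exp_add]
  congr 1
  field_simp
  ring

lemma gauss_exp {v : ℝ≥0} (hv : v ≠ 0) (c : ℝ) :
    ∫⁻ x, ENNReal.ofReal (Real.exp (c * x)) ∂(gaussianReal 0 v)
      = ENNReal.ofReal (Real.exp (c ^ 2 * v / 2)) := by
  rw [gaussianReal_of_var_ne_zero 0 hv,
    lintegral_withDensity_eq_lintegral_mul _ (measurable_gaussianPDF 0 v) (meas_exp_mul c)]
  have : ∀ x : ℝ, (gaussianPDF 0 v * fun x => ENNReal.ofReal (rexp (c * x))) x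
      = ENNReal.ofReal (rexp (c ^ 2 * v / 2)) * ENNReal.ofReal (gaussianPDFReal (c * v) v x) := by
    intro x
    simp only [Pi.mul_apply, gaussianPDF]
    rw [← ENNReal.ofReal_mul (gaussianPDFReal_nonneg 0 v x), aux_pdf_mul v hv c x,
      ENNReal.ofReal_mul (Real.exp_nonneg _)]
  simp only [this]
  rw [lintegral_const_mul _ (measurable_gaussianPDFReal (c * ↑v) v).ennreal_ofReal]
  have h1 : ∫⁻ x, ENNReal.ofReal (gaussianPDFReal (c * v) v x) = 1 :=
    lintegral_gaussianPDF_eq_one (c * v) hv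
  rw [h1, mul_one]

lemma sq_mul_cosh_le (x : ℝ) : x ^ 2 * Real.cosh x ≤ Real.cosh (2 * x) - 1 := by
  have h0 : (0:ℝ) ≤ |x| := abs_nonneg x
  have h1 : |x| / 2 ≤ sinh (|x| / 2) := self_le_sinh_iff.mpr (by positivity)
  have h2 : sinh |x| = 2 * sinh (|x| / 2) * cosh (|x| / 2) := by
    rw [← Real.sinh_two_mul]; ring_nf
  have h4 : cosh (2 * x) = cosh x ^ 2 + sinh x ^ 2 := Real.cosh_two_mul x
  have h5 : cosh x ^ 2 = sinh x ^ 2 + 1 := Real.cosh_sq x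
  have h6 : sinh |x| ^ 2 = sinh x ^ 2 := by
    rcases abs_cases x with ⟨h, _⟩ | ⟨h, _⟩ <;> rw [h] <;> simp [Real.sinh_neg]
  have h7 : cosh (|x| / 2) ^ 2 = sinh (|x| / 2) ^ 2 + 1 := Real.cosh_sq _
  have h3 : cosh x = cosh (|x| / 2) ^ 2 + sinh (|x| / 2) ^ 2 := by
    rw [← Real.cosh_abs x, ← Real.cosh_two_mul]; ring_nf
  have hc : (0:ℝ) < cosh (|x| / 2) := Real.cosh_pos _
  have h9 : |x| * cosh (|x| / 2) ≤ sinh |x| := by nlinarith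
  have h11 : (|x| * cosh (|x| / 2)) ^ 2 ≤ sinh |x| ^ 2 := by
    have hnn : 0 ≤ |x| * cosh (|x| / 2) := by positivity
    exact pow_le_pow_left₀ hnn h9 2
  have h10 : x ^ 2 = |x| ^ 2 := (sq_abs x).symm
  nlinarith [sq_nonneg (|x| * sinh (|x| / 2)), sq_nonneg x]

lemma exp_abs_le (a x : ℝ) (ha : 0 < a) :
    Real.exp |x| ≤ 1 + a * Real.cosh x + (1 / a) * (Real.cosh (2 * x) - 1) := by
  have h0 : (0:ℝ) ≤ |x| := abs_nonneg x
  have h8 : Real.cosh |x| = Real.cosh x := Real.cosh_abs x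
  have hcp : (0:ℝ) < Real.cosh x := Real.cosh_pos _
  have hA : Real.exp |x| ≤ 1 + |x| * Real.exp |x| := by
    have h := Real.add_one_le_exp (-|x|)
    have hp := Real.exp_pos |x|
    have hm : Real.exp (-|x|) * Real.exp |x| = 1 := by
      rw [← Real.exp_add]; simp
    nlinarith
  have hB : Real.exp |x| ≤ 2 * Real.cosh x := by
    rw [← h8, Real.cosh_eq]
    have := Real.exp_pos (-|x|)
    nlinarith
  have hC : 2 * |x| ≤ x ^ 2 / a + a := by
    rw [← sq_abs x, div_add' _ _ _ ha.ne', le_div_iff₀ ha]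
    nlinarith [sq_nonneg (|x| - a)]
  have hD : (1 / a) * (x ^ 2 * Real.cosh x) ≤ (1 / a) * (Real.cosh (2 * x) - 1) :=
    mul_le_mul_of_nonneg_left (sq_mul_cosh_le x) (by positivity)
  have hx : |x| * Real.exp |x| ≤ |x| * (2 * Real.cosh x) :=
    mul_le_mul_of_nonneg_left hB h0
  have hy : |x| * (2 * Real.cosh x) ≤ (x ^ 2 / a + a) * Real.cosh x := by
    nlinarith
  have hz : (x ^ 2 / a) * Real.cosh x = (1 / a) * (x ^ 2 * Real.cosh x) := by ring
  nlinarith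

lemma gauss_cosh {v : ℝ≥0} (hv : v ≠ 0) (c : ℝ) :
    ∫⁻ x, ENNReal.ofReal (Real.cosh (c * x)) ∂(gaussianReal 0 v)
      = ENNReal.ofReal (Real.exp (c ^ 2 * v / 2)) := by
  have key : ∀ x : ℝ, ENNReal.ofReal (Real.cosh (c * x))
      = 2⁻¹ * (ENNReal.ofReal (rexp (c * x)) + ENNReal.ofReal (rexp (-c * x))) := by
    intro x
    rw [← ENNReal.ofReal_add (Real.exp_nonneg _) (Real.exp_nonneg _)]
    rw [show (2⁻¹ : ℝ≥0∞) = ENNReal.ofReal 2⁻¹ by simp [ENNReal.ofReal_inv_of_pos]]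
    rw [← ENNReal.ofReal_mul (by norm_num)]
    congr 1
    rw [Real.cosh_eq]
    ring_nf
  simp only [key]
  rw [lintegral_const_mul _ (show Measurable (fun x : ℝ => ENNReal.ofReal (rexp (c * x))
      + ENNReal.ofReal (rexp (-c * x))) from (meas_exp_mul c).add (meas_exp_mul (-c))),
    lintegral_add_left (meas_exp_mul c), gauss_exp hv c, gauss_exp hv (-c)]
  rw [neg_pow, ← ENNReal.ofReal_add (Real.exp_nonneg _) (Real.exp_nonneg _)]
  rw [show (2⁻¹ : ℝ≥0∞) = ENNReal.ofReal 2⁻¹ by simp [ENNReal.ofReal_inv_of_pos]]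
  rw [← ENNReal.ofReal_mul (by norm_num)]
  congr 1
  simp only [neg_one_sq, one_mul]
  ring

lemma gauss_cosh' {v : ℝ≥0} (hv : v ≠ 0) {β : ℝ} (c : ℝ) (hβ : 0 ≤ β) :
    ∫⁻ x, ENNReal.ofReal (β * Real.cosh (c * x)) ∂(gaussianReal 0 v)
      = ENNReal.ofReal (β * Real.exp (c ^ 2 * v / 2)) := by
  simp only [ENNReal.ofReal_mul hβ]
  rw [lintegral_const_mul _ (by apply Measurable.ennreal_ofReal; fun_prop), gauss_cosh hv c]

lemma gauss_cosh_sub {v : ℝ≥0} (hv : v ≠ 0) {β : ℝ} (c : ℝ) (hβ : 0 ≤ β) :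
    ∫⁻ x, ENNReal.ofReal (β * (Real.cosh (c * x) - 1)) ∂(gaussianReal 0 v)
      = ENNReal.ofReal (β * (Real.exp (c ^ 2 * v / 2) - 1)) := by
  have key : ∀ x : ℝ, ENNReal.ofReal (β * (Real.cosh (c * x) - 1))
      = ENNReal.ofReal (β * Real.cosh (c * x)) - ENNReal.ofReal β := by
    intro x
    rw [← ENNReal.ofReal_sub _ hβ]
    congr 1; ring
  simp only [key]
  rw [lintegral_sub measurable_const (by simp) (Filter.Eventually.of_forall fun x => by
      apply ENNReal.ofReal_le_ofReal
      nlinarith [Real.one_le_cosh (c * x)])]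
  rw [gauss_cosh' hv c hβ, lintegral_const, measure_univ, mul_one,
    ← ENNReal.ofReal_sub _ hβ]
  congr 1; ring

lemma exp_le_three : Real.exp 1 ≤ 3 := by
  have := Real.exp_one_lt_d9
  linarith

lemma exp_sub_one_le {s : ℝ} (hs : 0 ≤ s) : Real.exp s - 1 ≤ s * Real.exp s := by
  have h := Real.add_one_le_exp (-s)
  have hp := Real.exp_pos s
  have hm : Real.exp (-s) * Real.exp s = 1 := by rw [← Real.exp_add]; simp
  nlinarith

lemma var_ne_zero {a : ℝ} (ha : 0 < a) : ((a ^ 2).toNNReal : ℝ≥0) ≠ 0 := by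
  simp only [ne_eq, Real.toNNReal_eq_zero, not_le]
  positivity

lemma var_coe {a : ℝ} (ha : 0 < a) : (((a ^ 2).toNNReal : ℝ≥0) : ℝ) = a ^ 2 :=
  Real.coe_toNNReal _ (by positivity)

lemma gauss_B {a : ℝ} (ha : 0 < a) (ha1 : a ≤ 1) :
    ∫⁻ x, ENNReal.ofReal (Real.exp |x|) ∂(gaussianReal 0 (a ^ 2).toNNReal)
      ≤ ENNReal.ofReal (Real.exp (21 * a)) := by
  set v := (a ^ 2).toNNReal with hvdef
  have hv := var_ne_zero ha
  have hvc := var_coe ha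
  have step1 : ∫⁻ x, ENNReal.ofReal (Real.exp |x|) ∂(gaussianReal 0 v)
      ≤ ∫⁻ x, (ENNReal.ofReal (1 + a * Real.cosh (1 * x))
          + ENNReal.ofReal ((1 / a) * (Real.cosh (2 * x) - 1))) ∂(gaussianReal 0 v) := by
    apply lintegral_mono
    intro x
    calc ENNReal.ofReal (Real.exp |x|)
        ≤ ENNReal.ofReal ((1 + a * Real.cosh (1 * x)) + (1 / a) * (Real.cosh (2 * x) - 1)) := by
          apply ENNReal.ofReal_le_ofReal
          simpa using exp_abs_le a x ha
      _ ≤ _ := ENNReal.ofReal_add_le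
  refine step1.trans ?_
  rw [lintegral_add_right _ (by apply Measurable.ennreal_ofReal; fun_prop)]
  have e1 : ∫⁻ x, ENNReal.ofReal (1 + a * Real.cosh (1 * x)) ∂(gaussianReal 0 v)
      = 1 + ENNReal.ofReal (a * Real.exp (1 ^ 2 * v / 2)) := by
    have : ∀ x : ℝ, ENNReal.ofReal (1 + a * Real.cosh (1 * x))
        = 1 + ENNReal.ofReal (a * Real.cosh (1 * x)) := by
      intro x
      rw [ENNReal.ofReal_add (by norm_num) (by positivity)]
      simp
    simp only [this]
    rw [lintegral_add_left measurable_const, lintegral_const, measure_univ, mul_one,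
      gauss_cosh' hv 1 ha.le]
  rw [e1, gauss_cosh_sub hv 2 (by positivity : (0:ℝ) ≤ 1 / a)]
  have hnum : a * Real.exp (1 ^ 2 * v / 2) + (1 / a) * (Real.exp (2 ^ 2 * v / 2) - 1)
      ≤ 21 * a := by
    rw [hvc]
    have h2a : (2:ℝ) ^ 2 * a ^ 2 / 2 = 2 * a ^ 2 := by ring
    have h1a : (1:ℝ) ^ 2 * a ^ 2 / 2 = a ^ 2 / 2 := by ring
    rw [h2a, h1a]
    have hb1 : Real.exp (a ^ 2 / 2) ≤ 3 := by
      calc Real.exp (a ^ 2 / 2) ≤ Real.exp 1 := Real.exp_le_exp.mpr (by nlinarith)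
        _ ≤ 3 := exp_le_three
    have hb2 : Real.exp (2 * a ^ 2) ≤ 9 := by
      calc Real.exp (2 * a ^ 2) ≤ Real.exp 2 := Real.exp_le_exp.mpr (by nlinarith)
        _ = Real.exp 1 * Real.exp 1 := by rw [← Real.exp_add]; norm_num
        _ ≤ 9 := by nlinarith [Real.exp_pos 1, exp_le_three]
    have hb3 : Real.exp (2 * a ^ 2) - 1 ≤ 18 * a ^ 2 := by
      have := exp_sub_one_le (s := 2 * a ^ 2) (by positivity)
      nlinarith
    have hb4 : (1 / a) * (Real.exp (2 * a ^ 2) - 1) ≤ 18 * a := by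
      rw [div_mul_eq_mul_div, one_mul, div_le_iff₀ ha]
      nlinarith
    nlinarith
  calc 1 + ENNReal.ofReal (a * Real.exp (1 ^ 2 * ↑v / 2))
        + ENNReal.ofReal (1 / a * (Real.exp (2 ^ 2 * ↑v / 2) - 1))
      = ENNReal.ofReal (1 + (a * Real.exp (1 ^ 2 * ↑v / 2)
          + 1 / a * (Real.exp (2 ^ 2 * ↑v / 2) - 1))) := by
        have hXnn : (0:ℝ) ≤ a * Real.exp (1 ^ 2 * ↑v / 2) := by positivity
        have hYnn : (0:ℝ) ≤ 1 / a * (Real.exp (2 ^ 2 * ↑v / 2) - 1) := by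
          have h1 : (1:ℝ) ≤ Real.exp (2 ^ 2 * ↑v / 2) := Real.one_le_exp (by positivity)
          have : (0:ℝ) ≤ Real.exp (2 ^ 2 * ↑v / 2) - 1 := by linarith
          exact mul_nonneg (by positivity) this
        rw [ENNReal.ofReal_add (by norm_num) (add_nonneg hXnn hYnn),
          ENNReal.ofReal_add hXnn hYnn, ← add_assoc]
        simp
    _ ≤ ENNReal.ofReal (Real.exp (21 * a)) := by
        apply ENNReal.ofReal_le_ofReal
        have := Real.add_one_le_exp (21 * a)
        nlinarith

lemma gauss_A {a : ℝ} (ha : 0 < a) (ha1 : a ≤ 1) :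
    ∫⁻ x, ENNReal.ofReal |x| ∂(gaussianReal 0 (a ^ 2).toNNReal)
      ≤ ENNReal.ofReal (10 * a) := by
  set v := (a ^ 2).toNNReal with hvdef
  have hv := var_ne_zero ha
  have hvc := var_coe ha
  have step1 : ∫⁻ x, ENNReal.ofReal |x| ∂(gaussianReal 0 v)
      ≤ ∫⁻ x, (ENNReal.ofReal (a / 2)
          + ENNReal.ofReal ((1 / (2 * a)) * (Real.cosh (2 * x) - 1))) ∂(gaussianReal 0 v) := by
    apply lintegral_mono
    intro x
    calc ENNReal.ofReal |x|
        ≤ ENNReal.ofReal (a / 2 + (1 / (2 * a)) * (Real.cosh (2 * x) - 1)) := by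
          apply ENNReal.ofReal_le_ofReal
          have h1 : x ^ 2 ≤ Real.cosh (2 * x) - 1 := by
            have := sq_mul_cosh_le x
            nlinarith [Real.one_le_cosh x, sq_nonneg x]
          have h2 : 2 * |x| * a ≤ x ^ 2 + a ^ 2 := by
            nlinarith [sq_nonneg (|x| - a), sq_abs x]
          have hrw : 2 * a * (a / 2 + 1 / (2 * a) * (Real.cosh (2 * x) - 1))
              = a ^ 2 + (Real.cosh (2 * x) - 1) := by
            field_simp
          have key : 2 * a * |x| ≤ 2 * a * (a / 2 + 1 / (2 * a) * (Real.cosh (2 * x) - 1)) := by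
            rw [hrw]
            nlinarith
          exact (mul_le_mul_iff_right₀ (by positivity : (0:ℝ) < 2 * a)).mp key
      _ ≤ _ := ENNReal.ofReal_add_le
  refine step1.trans ?_
  rw [lintegral_add_left measurable_const, lintegral_const, measure_univ, mul_one,
    gauss_cosh_sub hv 2 (by positivity : (0:ℝ) ≤ 1 / (2*a)),
    ← ENNReal.ofReal_add (by positivity) ?hY]
  case hY =>
    have h1 : (1:ℝ) ≤ Real.exp (2 ^ 2 * ↑v / 2) := Real.one_le_exp (by positivity)
    have : (0:ℝ) ≤ Real.exp (2 ^ 2 * ↑v / 2) - 1 := by linarith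
    exact mul_nonneg (by positivity) this
  apply ENNReal.ofReal_le_ofReal
  rw [hvc]
  have h2a : (2:ℝ) ^ 2 * a ^ 2 / 2 = 2 * a ^ 2 := by ring
  rw [h2a]
  have hb2 : Real.exp (2 * a ^ 2) ≤ 9 := by
    calc Real.exp (2 * a ^ 2) ≤ Real.exp 2 := Real.exp_le_exp.mpr (by nlinarith)
      _ = Real.exp 1 * Real.exp 1 := by rw [← Real.exp_add]; norm_num
      _ ≤ 9 := by nlinarith [Real.exp_pos 1, exp_le_three]
  have hb3 : Real.exp (2 * a ^ 2) - 1 ≤ 18 * a ^ 2 := by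
    have := exp_sub_one_le (s := 2 * a ^ 2) (by positivity)
    nlinarith
  have hb4 : (1 / (2 * a)) * (Real.exp (2 * a ^ 2) - 1) ≤ 9 * a := by
    rw [div_mul_eq_mul_div, one_mul, div_le_iff₀ (by positivity)]
    nlinarith
  linarith


lemma meas_symm : Measurable (fun q : ℝ × ℝ => Complex.equivRealProd.symm q) := by
  have : (fun q : ℝ × ℝ => Complex.equivRealProd.symm q)
      = fun q : ℝ × ℝ => Complex.equivRealProdCLM.symm q := rfl
  rw [this]
  exact Complex.equivRealProdCLM.symm.continuous.measurable

lemma symm_re (q : ℝ × ℝ) : (Complex.equivRealProd.symm q).re = q.1 := by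
  rw [Complex.equivRealProd_symm_apply]; simp

lemma symm_im (q : ℝ × ℝ) : (Complex.equivRealProd.symm q).im = q.2 := by
  rw [Complex.equivRealProd_symm_apply]; simp

lemma planar_B {a : ℝ} (ha : 0 < a) (ha1 : a ≤ 1) :
    ∫⁻ w : ℂ, ENNReal.ofReal (Real.exp (|w.re| + |w.im|)) ∂(planarGaussian a)
      ≤ ENNReal.ofReal (Real.exp (42 * a)) := by
  rw [planarGaussian, lintegral_map (by apply Measurable.ennreal_ofReal; fun_prop) meas_symm]
  simp only [symm_re, symm_im]
  have key : ∀ q : ℝ × ℝ, ENNReal.ofReal (rexp (|q.1| + |q.2|))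
      = ENNReal.ofReal (rexp |q.1|) * ENNReal.ofReal (rexp |q.2|) := by
    intro q
    rw [← ENNReal.ofReal_mul (Real.exp_nonneg _), ← Real.exp_add]
  simp only [key]
  have hmeas : AEMeasurable (fun t : ℝ => ENNReal.ofReal (rexp |t|))
      (gaussianReal 0 (a ^ 2).toNNReal) := by
    apply Measurable.aemeasurable; apply Measurable.ennreal_ofReal; fun_prop
  rw [lintegral_prod_mul hmeas hmeas]
  calc _ ≤ ENNReal.ofReal (Real.exp (21 * a)) * ENNReal.ofReal (Real.exp (21 * a)) :=
        mul_le_mul' (gauss_B ha ha1) (gauss_B ha ha1)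
    _ = ENNReal.ofReal (Real.exp (42 * a)) := by
        rw [← ENNReal.ofReal_mul (Real.exp_nonneg _), ← Real.exp_add]
        norm_num
        ring_nf

lemma planar_A {a : ℝ} (ha : 0 < a) (ha1 : a ≤ 1) :
    ∫⁻ w : ℂ, ENNReal.ofReal (|w.re| + |w.im|) ∂(planarGaussian a)
      ≤ ENNReal.ofReal (20 * a) := by
  rw [planarGaussian, lintegral_map (by apply Measurable.ennreal_ofReal; fun_prop) meas_symm]
  simp only [symm_re, symm_im]
  have key : ∀ q : ℝ × ℝ, ENNReal.ofReal (|q.1| + |q.2|)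
      = ENNReal.ofReal |q.1| + ENNReal.ofReal |q.2| := fun q =>
    ENNReal.ofReal_add (abs_nonneg _) (abs_nonneg _)
  simp only [key]
  rw [lintegral_add_left (by apply Measurable.ennreal_ofReal; fun_prop)]
  set μ := gaussianReal 0 (a ^ 2).toNNReal
  have hfst : (μ.prod μ).map Prod.fst = μ := by
    rw [Measure.map_fst_prod]; simp [measure_univ]
  have hsnd : (μ.prod μ).map Prod.snd = μ := by
    rw [Measure.map_snd_prod]; simp [measure_univ]
  have h1 : ∫⁻ q : ℝ × ℝ, ENNReal.ofReal |q.1| ∂(μ.prod μ) = ∫⁻ x, ENNReal.ofReal |x| ∂μ := by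
    conv_rhs => rw [← hfst]
    rw [lintegral_map (by apply Measurable.ennreal_ofReal; fun_prop) measurable_fst]
  have h2 : ∫⁻ q : ℝ × ℝ, ENNReal.ofReal |q.2| ∂(μ.prod μ) = ∫⁻ x, ENNReal.ofReal |x| ∂μ := by
    conv_rhs => rw [← hsnd]
    rw [lintegral_map (by apply Measurable.ennreal_ofReal; fun_prop) measurable_snd]
  rw [h1, h2]
  calc _ ≤ ENNReal.ofReal (10 * a) + ENNReal.ofReal (10 * a) :=
        add_le_add (gauss_A ha ha1) (gauss_A ha ha1)
    _ = ENNReal.ofReal (20 * a) := by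
        rw [← ENNReal.ofReal_add (by positivity) (by positivity)]
        congr 1; ring





lemma add_rpow_le {A B q : ℝ} (hA : 0 ≤ A) (hB : 0 ≤ B) (hq : 1 ≤ q) :
    A ^ q + B ^ q ≤ (A + B) ^ q := by
  have h := NNReal.add_rpow_le_rpow_add (⟨A, hA⟩ : ℝ≥0) (⟨B, hB⟩ : ℝ≥0) hq
  have := NNReal.coe_le_coe.mpr h
  push_cast [NNReal.coe_rpow] at this
  exact this

lemma finset_sum_rpow_le {q : ℝ} (hq : 1 ≤ q) (s : Finset ℕ) (c : ℕ → ℝ)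
    (hc : ∀ i, 0 ≤ c i) : ∑ i ∈ s, c i ^ q ≤ (∑ i ∈ s, c i) ^ q := by
  classical
  induction s using Finset.induction with
  | empty => simp [Real.zero_rpow (by linarith : q ≠ 0)]
  | @insert i s his ih =>
    rw [Finset.sum_insert his, Finset.sum_insert his]
    calc c i ^ q + ∑ j ∈ s, c j ^ q ≤ c i ^ q + (∑ j ∈ s, c j) ^ q := by linarith
      _ ≤ (c i + ∑ j ∈ s, c j) ^ q :=
        add_rpow_le (hc i) (Finset.sum_nonneg fun j _ => hc j) hq

lemma lp_norm_le_tsum {p : ℝ≥0∞} [Fact (1 ≤ p)] (hp' : p ≠ ⊤)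
    (z : lp (fun _ : ℕ => ℂ) p)
    (hsz : Summable fun n => ‖(z : ∀ _ : ℕ, ℂ) n‖) :
    ‖z‖ ≤ ∑' n, ‖(z : ∀ _ : ℕ, ℂ) n‖ := by
  have hq1 : 1 ≤ p.toReal := by
    have := ENNReal.toReal_mono hp' (Fact.out : (1:ℝ≥0∞) ≤ p)
    simpa using this
  have hq0 : 0 < p.toReal := lt_of_lt_of_le zero_lt_one hq1
  have hCnn : 0 ≤ ∑' n, ‖(z : ∀ _ : ℕ, ℂ) n‖ := tsum_nonneg fun n => norm_nonneg _
  apply lp.norm_le_of_forall_sum_le hq0 hCnn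
  intro s
  calc ∑ i ∈ s, ‖(z : ∀ _ : ℕ, ℂ) i‖ ^ p.toReal
      ≤ (∑ i ∈ s, ‖(z : ∀ _ : ℕ, ℂ) i‖) ^ p.toReal :=
        finset_sum_rpow_le hq1 s _ fun i => norm_nonneg _
    _ ≤ (∑' n, ‖(z : ∀ _ : ℕ, ℂ) n‖) ^ p.toReal := by
        apply Real.rpow_le_rpow (Finset.sum_nonneg fun i _ => norm_nonneg _)
          (Summable.sum_le_tsum s (fun i _ => norm_nonneg _) hsz) hq0.le

lemma ofReal_prod_range (f : ℕ → ℝ) (hf : ∀ i, 0 ≤ f i) (N : ℕ) :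
    ENNReal.ofReal (∏ i ∈ Finset.range N, f i)
      = ∏ i ∈ Finset.range N, ENNReal.ofReal (f i) := by
  induction N with
  | zero => simp
  | succ N ih =>
    rw [Finset.prod_range_succ, Finset.prod_range_succ,
      ENNReal.ofReal_mul (Finset.prod_nonneg fun i _ => hf i), ih]


end FerniqueAux

end FerniqueAuxSection

open FerniqueAux in
theorem fernique_type_estimate
    (a : ℕ → ℝ) (ha : ∀ i, 0 < a i) (hsummable : Summable a) (hsum : ∑' i, a i < 1)
    (p : ℝ≥0∞) [Fact (1 ≤ p)] (hp' : p ≠ ⊤)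
    [MeasurableSpace (lp (fun _ : ℕ => ℂ) p)] [BorelSpace (lp (fun _ : ℕ => ℂ) p)]
    (P : Measure (lp (fun _ : ℕ => ℂ) p)) [IsProbabilityMeasure P]
    (hindep : iIndepFun
      (fun i (z : lp (fun _ : ℕ => ℂ) p) => (z : ∀ _ : ℕ, ℂ) i) P)
    (hmarg : ∀ i, P.map (fun z : lp (fun _ : ℕ => ℂ) p => (z : ∀ _ : ℕ, ℂ) i)
      = planarGaussian (a i))
    (φ : StrongDual ℂ (lp (fun _ : ℕ => ℂ) p)) (hφ : φ ≠ 0)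
    (ε : ℝ) (hε : ε ≤ 1 / ‖φ‖) :
    ∫⁻ z, ENNReal.ofReal (Real.exp (ε * ‖φ z‖)) ∂P
      ≤ ∫⁻ z, ENNReal.ofReal
          (Real.exp (∑' n, (|((z : ∀ _ : ℕ, ℂ) n).re| + |((z : ∀ _ : ℕ, ℂ) n).im|))) ∂P
    ∧ ∫⁻ z, ENNReal.ofReal
          (Real.exp (∑' n, (|((z : ∀ _ : ℕ, ℂ) n).re| + |((z : ∀ _ : ℕ, ℂ) n).im|))) ∂P < ⊤ := by
  have hp0 : p ≠ 0 := by
    have h1 : (1:ℝ≥0∞) ≤ p := Fact.out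
    intro h
    rw [h] at h1
    simp at h1
  -- coordinate maps are measurable
  have hXmeas : ∀ i, Measurable fun z : lp (fun _ : ℕ => ℂ) p => (z : ∀ _ : ℕ, ℂ) i := by
    intro i
    have hlip : LipschitzWith 1 fun z : lp (fun _ : ℕ => ℂ) p => (z : ∀ _ : ℕ, ℂ) i := by
      apply LipschitzWith.of_dist_le_mul
      intro z w
      rw [dist_eq_norm, dist_eq_norm, NNReal.coe_one, one_mul]
      have h1 : (z : ∀ _ : ℕ, ℂ) i - (w : ∀ _ : ℕ, ℂ) i
          = ((z - w : lp (fun _ : ℕ => ℂ) p) : ∀ _ : ℕ, ℂ) i := by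
        rw [lp.coeFn_sub]; rfl
      rw [h1]
      exact lp.norm_apply_le_norm hp0 _ i
    exact hlip.continuous.measurable
  set G : ℕ → (lp (fun _ : ℕ => ℂ) p) → ℝ :=
    fun n z => |((z : ∀ _ : ℕ, ℂ) n).re| + |((z : ∀ _ : ℕ, ℂ) n).im| with hGdef
  have hGnn : ∀ n z, 0 ≤ G n z := fun n z => add_nonneg (abs_nonneg _) (abs_nonneg _)
  have hGmeas : ∀ n, Measurable (G n) := fun n =>
    ((Complex.measurable_re.comp (hXmeas n)).abs.add (Complex.measurable_im.comp (hXmeas n)).abs)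
  have ha1 : ∀ i, a i ≤ 1 := fun i =>
    le_trans (Summable.le_tsum hsummable i fun j _ => (ha j).le) hsum.le
  -- transfer to the planar Gaussian marginals
  have hmargint : ∀ (i : ℕ) (h : ℂ → ℝ≥0∞), Measurable h →
      ∫⁻ z, h ((z : ∀ _ : ℕ, ℂ) i) ∂P = ∫⁻ w, h w ∂(planarGaussian (a i)) := by
    intro i h hh
    rw [← hmarg i, lintegral_map hh (hXmeas i)]
  -- a.e. summability
  have hGsum : ∀ᵐ z ∂P, Summable fun n => G n z := by
    have hmeas_tsum : Measurable fun z => ∑' n, ENNReal.ofReal (G n z) :=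
      Measurable.ennreal_tsum fun n => (hGmeas n).ennreal_ofReal
    have hint : ∫⁻ z, (∑' n, ENNReal.ofReal (G n z)) ∂P ≤ ENNReal.ofReal 20 := by
      rw [lintegral_tsum fun n => ((hGmeas n).ennreal_ofReal).aemeasurable]
      have hterm : ∀ n, ∫⁻ z, ENNReal.ofReal (G n z) ∂P ≤ ENNReal.ofReal (20 * a n) := by
        intro n
        have := hmargint n (fun w => ENNReal.ofReal (|w.re| + |w.im|))
          (by apply Measurable.ennreal_ofReal; fun_prop)
        calc ∫⁻ z, ENNReal.ofReal (G n z) ∂P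
            = ∫⁻ w : ℂ, ENNReal.ofReal (|w.re| + |w.im|) ∂(planarGaussian (a n)) := this
          _ ≤ ENNReal.ofReal (20 * a n) := planar_A (ha n) (ha1 n)
      calc ∑' n, ∫⁻ z, ENNReal.ofReal (G n z) ∂P
          ≤ ∑' n, ENNReal.ofReal (20 * a n) := ENNReal.tsum_le_tsum hterm
        _ = ENNReal.ofReal (∑' n, 20 * a n) :=
            (ENNReal.ofReal_tsum_of_nonneg (fun n => mul_nonneg (by norm_num) (ha n).le)
              (hsummable.mul_left 20)).symm
        _ ≤ ENNReal.ofReal 20 := by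
            apply ENNReal.ofReal_le_ofReal
            rw [tsum_mul_left]
            exact mul_le_of_le_one_right (by norm_num) hsum.le
    have hae : ∀ᵐ z ∂P, (∑' n, ENNReal.ofReal (G n z)) < ⊤ :=
      ae_lt_top hmeas_tsum (lt_of_le_of_lt hint (by simp)).ne
    filter_upwards [hae] with z hz
    have := ENNReal.summable_toReal hz.ne
    refine this.congr fun n => ?_
    exact ENNReal.toReal_ofReal (hGnn n z)
  -- pointwise a.e. bound
  have hφpos : (0:ℝ) < ‖φ‖ := norm_pos_iff.mpr hφ
  have hpt : ∀ᵐ z ∂P, ε * ‖φ z‖ ≤ ∑' n, G n z := by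
    filter_upwards [hGsum] with z hz
    rcases le_or_gt ε 0 with hε0 | hε0
    · have h1 : ε * ‖φ z‖ ≤ 0 := mul_nonpos_iff.mpr (Or.inr ⟨hε0, norm_nonneg _⟩)
      exact h1.trans (tsum_nonneg fun n => hGnn n z)
    · have hsz : Summable fun n => ‖(z : ∀ _ : ℕ, ℂ) n‖ :=
        Summable.of_nonneg_of_le (fun n => norm_nonneg _)
          (fun n => (Complex.norm_le_abs_re_add_abs_im _)) hz
      have h1 : ‖φ z‖ ≤ ‖φ‖ * ‖z‖ := φ.le_opNorm z
      have h2 : ε * ‖φ‖ ≤ 1 := by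
        rw [le_div_iff₀ hφpos] at hε
        linarith
      have h3 : ‖z‖ ≤ ∑' n, ‖(z : ∀ _ : ℕ, ℂ) n‖ := lp_norm_le_tsum hp' z hsz
      have h4 : ∑' n, ‖(z : ∀ _ : ℕ, ℂ) n‖ ≤ ∑' n, G n z :=
        Summable.tsum_le_tsum (fun n => Complex.norm_le_abs_re_add_abs_im _) hsz hz
      nlinarith [norm_nonneg z, norm_nonneg (φ z)]
  constructor
  · apply lintegral_mono_ae
    filter_upwards [hpt] with z hz
    exact ENNReal.ofReal_le_ofReal (Real.exp_le_exp.mpr hz)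
  -- part 2 : finiteness
  · set f : ℕ → (lp (fun _ : ℕ => ℂ) p) → ℝ≥0∞ :=
      fun i z => ENNReal.ofReal (Real.exp (G i z)) with hfdef
    have hf_meas : ∀ i, Measurable (f i) := fun i =>
      (Real.measurable_exp.comp (hGmeas i)).ennreal_ofReal
    have hf_indep : iIndepFun f P := by
      have := hindep.comp
        (fun i => fun w : ℂ => ENNReal.ofReal (Real.exp (|w.re| + |w.im|)))
        (fun i => by apply Measurable.ennreal_ofReal; fun_prop)
      exact this
    set u : ℕ → (lp (fun _ : ℕ => ℂ) p) → ℝ≥0∞ :=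
      fun N z => ∏ i ∈ Finset.range N, f i z with hudef
    have hu_eq : ∀ N z, u N z = ENNReal.ofReal (Real.exp (∑ n ∈ Finset.range N, G n z)) := by
      intro N z
      rw [Real.exp_sum, ofReal_prod_range _ (fun i => Real.exp_nonneg _)]
    have hu_meas : ∀ N, Measurable (u N) := fun N =>
      Finset.measurable_prod _ fun i _ => hf_meas i
    have hu_mono : Monotone u := by
      intro N M hNM z
      rw [hu_eq, hu_eq]
      apply ENNReal.ofReal_le_ofReal
      apply Real.exp_le_exp.mpr
      exact Finset.sum_le_sum_of_subset_of_nonneg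
        (Finset.range_subset_range.mpr hNM) (fun i _ _ => hGnn i z)
    have h_ae_sup : ∀ᵐ z ∂P,
        ENNReal.ofReal (Real.exp (∑' n, G n z)) ≤ ⨆ N, u N z := by
      filter_upwards [hGsum] with z hz
      have htend : Filter.Tendsto (fun N => u N z) Filter.atTop
          (nhds (ENNReal.ofReal (Real.exp (∑' n, G n z)))) := by
        have h1 := hz.hasSum.tendsto_sum_nat
        have h2 := (ENNReal.continuous_ofReal.tendsto _).comp
          ((Real.continuous_exp.tendsto _).comp h1)
        refine h2.congr fun N => ?_
        rw [hu_eq]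
        rfl
      exact le_of_tendsto' htend fun N => le_iSup (fun N => u N z) N
    have hIbound : ∀ i, ∫⁻ z, f i z ∂P ≤ ENNReal.ofReal (Real.exp (42 * a i)) := by
      intro i
      have := hmargint i (fun w => ENNReal.ofReal (Real.exp (|w.re| + |w.im|)))
        (by apply Measurable.ennreal_ofReal; fun_prop)
      calc ∫⁻ z, f i z ∂P
          = ∫⁻ w : ℂ, ENNReal.ofReal (Real.exp (|w.re| + |w.im|)) ∂(planarGaussian (a i)) := this
        _ ≤ ENNReal.ofReal (Real.exp (42 * a i)) := planar_B (ha i) (ha1 i)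
    have hprod : ∀ N, ∫⁻ z, u N z ∂P = ∏ i ∈ Finset.range N, ∫⁻ z, f i z ∂P := by
      intro N
      induction N with
      | zero => simp [hudef]
      | succ N ih =>
        have hsplit : ∀ z, u (N + 1) z
            = ((∏ i ∈ Finset.range N, f i) * f N) z := by
          intro z
          simp only [hudef, Finset.prod_range_succ, Pi.mul_apply, Finset.prod_apply]
        simp only [hsplit]
        have hprodmeas : Measurable (∏ j ∈ Finset.range N, f j) := by
          rw [Finset.prod_fn]
          exact Finset.measurable_prod _ fun i _ => hf_meas i
        rw [lintegral_mul_eq_lintegral_mul_lintegral_of_indepFun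
          hprodmeas (hf_meas N)
          (hf_indep.indepFun_prod_range_succ hf_meas N)]
        rw [Finset.prod_range_succ, ← ih]
        congr 1
        apply lintegral_congr
        intro z
        simp [hudef, Finset.prod_apply]
    have hub : ∀ N, ∫⁻ z, u N z ∂P ≤ ENNReal.ofReal (Real.exp 42) := by
      intro N
      rw [hprod N]
      calc ∏ i ∈ Finset.range N, ∫⁻ z, f i z ∂P
          ≤ ∏ i ∈ Finset.range N, ENNReal.ofReal (Real.exp (42 * a i)) :=
            Finset.prod_le_prod' fun i _ => hIbound i
        _ = ENNReal.ofReal (Real.exp (∑ i ∈ Finset.range N, 42 * a i)) := by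
            rw [Real.exp_sum, ofReal_prod_range _ fun i => Real.exp_nonneg _]
        _ ≤ ENNReal.ofReal (Real.exp 42) := by
            apply ENNReal.ofReal_le_ofReal
            apply Real.exp_le_exp.mpr
            have hps : ∑ i ∈ Finset.range N, a i ≤ ∑' i, a i :=
              Summable.sum_le_tsum _ (fun i _ => (ha i).le) hsummable
            rw [← Finset.mul_sum]
            nlinarith
    calc ∫⁻ z, ENNReal.ofReal
          (Real.exp (∑' n, (|((z : ∀ _ : ℕ, ℂ) n).re| + |((z : ∀ _ : ℕ, ℂ) n).im|))) ∂P
        ≤ ∫⁻ z, ⨆ N, u N z ∂P := lintegral_mono_ae h_ae_sup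
      _ = ⨆ N, ∫⁻ z, u N z ∂P := lintegral_iSup hu_meas hu_mono
      _ ≤ ENNReal.ofReal (Real.exp 42) := iSup_le hub
      _ < ⊤ := ENNReal.ofReal_lt_top
end
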